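/- arXiv:0805.4000 — 8 statements merged into one kernel-verified Lean document; each statement's English description precedes it below -/
import Mathlib

section
/- Let A and B be nilpotent groups of class at most 2 and let G = (A*B)/[[A*B,A*B],A*B] be their 2-nilpotent product. Then the canonical maps A → G and B → G are injective. -/
/-- The 2-nilpotent product of `A` and `B`: the free product modulo the third
term of its lower central series. -/
abbrev nilProd2 (A B : Type) [Group A] [Group B] : Type :=
  Monoid.Coprod A B ⧸ (⊤ : Subgroup (Monoid.Coprod A B)).lowerCentralSeries 2

/-- Canonical map `A → A ∐² B`. -/
def nilProd2.inl (A B : Type) [Group A] [Group B] : A →* nilProd2 A B :=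
  (QuotientGroup.mk' _).comp Monoid.Coprod.inl

/-- Canonical map `B → A ∐² B`. -/
def nilProd2.inr (A B : Type) [Group A] [Group B] : B →* nilProd2 A B :=
  (QuotientGroup.mk' _).comp Monoid.Coprod.inr

/-- The (normal, indeed central) subgroup of the 2-nilpotent product generated by
`{ h φ(h)⁻¹ : h ∈ H }`. -/
def amalgamRel (A B : Type) [Group A] [Group B] (H : Subgroup A) (K : Subgroup B)
    (φ : H ≃* K) : Subgroup (nilProd2 A B) :=
  Subgroup.normalClosure
    {x | ∃ h : H, x = nilProd2.inl A B h * (nilProd2.inr A B (φ h))⁻¹}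

instance (A B : Type) [Group A] [Group B] (H : Subgroup A) (K : Subgroup B)
    (φ : H ≃* K) : (amalgamRel A B H K φ).Normal :=
  Subgroup.normalClosure_normal

/-- The amalgamated coproduct `A ∐²_φ B`. -/
abbrev amalgam (A B : Type) [Group A] [Group B] (H : Subgroup A) (K : Subgroup B)
    (φ : H ≃* K) : Type :=
  nilProd2 A B ⧸ amalgamRel A B H K φ

/-- Canonical map `A → A ∐²_φ B`. -/
def amalgam.inl (A B : Type) [Group A] [Group B] (H : Subgroup A) (K : Subgroup B)
    (φ : H ≃* K) : A →* amalgam A B H K φ :=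
  (QuotientGroup.mk' _).comp (nilProd2.inl A B)

/-- Canonical map `B → A ∐²_φ B`. -/
def amalgam.inr (A B : Type) [Group A] [Group B] (H : Subgroup A) (K : Subgroup B)
    (φ : H ≃* K) : B →* amalgam A B H K φ :=
  (QuotientGroup.mk' _).comp (nilProd2.inr A B)

/-- A group is capable if it is a central factor group. -/
def IsCapable (G : Type) [Group G] : Prop :=
  ∃ (E : Type) (_ : Group E), Nonempty ((E ⧸ Subgroup.center E) ≃* G)

/-- The epicentre of `G`: the intersection of the images of the centers over
all central extensions of `G`. -/
def epicenter (G : Type) [Group G] : Subgroup G :=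
  ⨅ (E : Type) (_ : Group E) (ψ : E →* G) (_ : Function.Surjective ψ)
    (_ : ψ.ker ≤ Subgroup.center E), Subgroup.map ψ (Subgroup.center E)

instance (G : Type) [Group G] [Group.FG G] : Group.FG (Abelianization G) :=
  Group.fg_of_surjective (f := Abelianization.of)
    (fun x => Quotient.inductionOn' x (fun g => ⟨g, rfl⟩))


theorem nilProd2.aux_inj {A B C : Type} [Group A] [Group B] [Group C]
    (f : Monoid.Coprod A B →* C) (hC : (⊤ : Subgroup C).lowerCentralSeries 2 = ⊥)
    (ι : C →* Monoid.Coprod A B) (h : ∀ c, f (ι c) = c) :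
    Function.Injective ((QuotientGroup.mk' ((⊤ : Subgroup (Monoid.Coprod A B)).lowerCentralSeries 2)).comp ι) := by
  have hker : (⊤ : Subgroup (Monoid.Coprod A B)).lowerCentralSeries 2 ≤ f.ker := by
    intro x hx
    have := Subgroup.lowerCentralSeries.map f 2 ⟨x, hx, rfl⟩
    rw [hC] at this
    simpa [MonoidHom.mem_ker] using this
  let g := QuotientGroup.lift _ f hker
  have : Function.LeftInverse g ((QuotientGroup.mk' ((⊤ : Subgroup (Monoid.Coprod A B)).lowerCentralSeries 2)).comp ι) := by
    intro a; simp only [g, MonoidHom.comp_apply, QuotientGroup.mk'_apply, QuotientGroup.lift_mk, h]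
  exact this.injective

/-- the canonical maps into the 2-nilpotent product are injective. -/
theorem stmt_1 (A B : Type) [Group A] [Group B]
    (hA : (⊤ : Subgroup A).lowerCentralSeries 2 = ⊥) (hB : (⊤ : Subgroup B).lowerCentralSeries 2 = ⊥) :
    Function.Injective (nilProd2.inl A B) ∧ Function.Injective (nilProd2.inr A B) := by
  constructor
  · exact nilProd2.aux_inj Monoid.Coprod.fst hA Monoid.Coprod.inl (fun a => by simp)
  · exact nilProd2.aux_inj (Monoid.Coprod.snd (M := A)) hB Monoid.Coprod.inr (fun b => by simp)
end

section
/- Let A and B be nilpotent groups of class at most 2 and let G be their 2-nilpotent product. Then every element of G can be written uniquely in the form αβγ with α in (the image of) A, β in (the image of) B, and γ in the commutator subgroup [B,A] ≤ G generated by commutators of elements of B with elements of A. -/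
section Stmt3Aux

open scoped commutatorElement

variable {A B : Type} [Group A] [Group B]

lemma nilProd2.central (x y g : nilProd2 A B) : ⁅x, y⁆ * g = g * ⁅x, y⁆ := by
  obtain ⟨u, rfl⟩ := QuotientGroup.mk'_surjective _ x
  obtain ⟨v, rfl⟩ := QuotientGroup.mk'_surjective _ y
  obtain ⟨w, rfl⟩ := QuotientGroup.mk'_surjective _ g
  have h1 : ⁅u, v⁆ ∈ (⊤ : Subgroup (Monoid.Coprod A B)).lowerCentralSeries 1 :=
    Subgroup.commutator_mem_commutator (Subgroup.mem_top u) (Subgroup.mem_top v)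
  have h : ⁅⁅u, v⁆, w⁆ ∈ (⊤ : Subgroup (Monoid.Coprod A B)).lowerCentralSeries 2 := by
    rw [show (2:ℕ) = 1 + 1 from rfl, Subgroup.lowerCentralSeries_succ]
    exact Subgroup.subset_closure ⟨⁅u, v⁆, h1, w, Subgroup.mem_top w, by group⟩
  have h2 : (QuotientGroup.mk' ((⊤ : Subgroup (Monoid.Coprod A B)).lowerCentralSeries 2)) ⁅⁅u, v⁆, w⁆ = 1 := by
    rw [QuotientGroup.mk'_apply, QuotientGroup.eq_one_iff]
    exact h
  have h3 : ⁅⁅(QuotientGroup.mk' ((⊤ : Subgroup (Monoid.Coprod A B)).lowerCentralSeries 2)) u,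
      (QuotientGroup.mk' ((⊤ : Subgroup (Monoid.Coprod A B)).lowerCentralSeries 2)) v⁆,
      (QuotientGroup.mk' ((⊤ : Subgroup (Monoid.Coprod A B)).lowerCentralSeries 2)) w⁆ = 1 := by
    rw [← map_commutatorElement, ← map_commutatorElement]; exact h2
  exact commutatorElement_eq_one_iff_commute.mp h3

/-- Projection onto `A`, killing `B`. -/
def nilProd2.projA (hA : (⊤ : Subgroup A).lowerCentralSeries 2 = ⊥) : nilProd2 A B →* A :=
  QuotientGroup.lift _ (Monoid.Coprod.lift (MonoidHom.id A) 1) (by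
    intro x hx
    have h2 : Monoid.Coprod.lift (MonoidHom.id A) (1 : B →* A) x ∈ (⊤ : Subgroup A).lowerCentralSeries 2 :=
      Subgroup.lowerCentralSeries.map (Monoid.Coprod.lift (MonoidHom.id A) (1 : B →* A)) 2 ⟨x, hx, rfl⟩
    rw [hA] at h2
    simpa using h2)

/-- Projection onto `B`, killing `A`. -/
def nilProd2.projB (hB : (⊤ : Subgroup B).lowerCentralSeries 2 = ⊥) : nilProd2 A B →* B :=
  QuotientGroup.lift _ (Monoid.Coprod.lift 1 (MonoidHom.id B)) (by
    intro x hx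
    have h2 : Monoid.Coprod.lift (1 : A →* B) (MonoidHom.id B) x ∈ (⊤ : Subgroup B).lowerCentralSeries 2 :=
      Subgroup.lowerCentralSeries.map (Monoid.Coprod.lift (1 : A →* B) (MonoidHom.id B)) 2 ⟨x, hx, rfl⟩
    rw [hB] at h2
    simpa using h2)

@[simp] lemma nilProd2.projA_inl (hA : (⊤ : Subgroup A).lowerCentralSeries 2 = ⊥) (a : A) :
    nilProd2.projA (B := B) hA (nilProd2.inl A B a) = a := by
  simp [nilProd2.projA, nilProd2.inl, -Subgroup.lowerCentralSeries_succ]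

@[simp] lemma nilProd2.projA_inr (hA : (⊤ : Subgroup A).lowerCentralSeries 2 = ⊥) (b : B) :
    nilProd2.projA (B := B) hA (nilProd2.inr A B b) = 1 := by
  simp [nilProd2.projA, nilProd2.inr, -Subgroup.lowerCentralSeries_succ]

@[simp] lemma nilProd2.projB_inl (hB : (⊤ : Subgroup B).lowerCentralSeries 2 = ⊥) (a : A) :
    nilProd2.projB (A := A) hB (nilProd2.inl A B a) = 1 := by
  simp [nilProd2.projB, nilProd2.inl, -Subgroup.lowerCentralSeries_succ]

@[simp] lemma nilProd2.projB_inr (hB : (⊤ : Subgroup B).lowerCentralSeries 2 = ⊥) (b : B) :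
    nilProd2.projB (A := A) hB (nilProd2.inr A B b) = b := by
  simp [nilProd2.projB, nilProd2.inr, -Subgroup.lowerCentralSeries_succ]

end Stmt3Aux

open scoped commutatorElement in
/-- unique normal form `α β γ` in the 2-nilpotent product, with
`α ∈ A`, `β ∈ B` and `γ ∈ [B,A]`. -/
theorem stmt_3 (A B : Type) [Group A] [Group B]
    (hA : (⊤ : Subgroup A).lowerCentralSeries 2 = ⊥) (hB : (⊤ : Subgroup B).lowerCentralSeries 2 = ⊥) :
    ∀ g : nilProd2 A B,
      ∃! t : A × B ×
          ↥(⁅(nilProd2.inr A B).range, (nilProd2.inl A B).range⁆ : Subgroup (nilProd2 A B)),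
        g = nilProd2.inl A B t.1 * nilProd2.inr A B t.2.1 * (t.2.2 : nilProd2 A B) := by
  intro g
  set C : Subgroup (nilProd2 A B) := ⁅(nilProd2.inr A B).range, (nilProd2.inl A B).range⁆ with hC
  -- existence
  have ex : ∃ a : A, ∃ b : B, ∃ c ∈ C, g = nilProd2.inl A B a * nilProd2.inr A B b * c := by
    obtain ⟨w, rfl⟩ := QuotientGroup.mk'_surjective _ g
    induction w using Monoid.Coprod.induction_on' with
    | one => exact ⟨1, 1, 1, one_mem _, by simp [-Subgroup.lowerCentralSeries_succ]⟩
    | inl_mul m x ih =>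
      obtain ⟨a, b, c, hc, hx⟩ := ih
      refine ⟨m * a, b, c, hc, ?_⟩
      have : (QuotientGroup.mk' ((⊤ : Subgroup (Monoid.Coprod A B)).lowerCentralSeries 2))
          (Monoid.Coprod.inl m * x) = nilProd2.inl A B m *
          (QuotientGroup.mk' ((⊤ : Subgroup (Monoid.Coprod A B)).lowerCentralSeries 2)) x := by
        rw [map_mul]; rfl
      rw [this, hx, map_mul]
      group
    | inr_mul n x ih =>
      obtain ⟨a, b, c, hc, hx⟩ := ih
      set X := nilProd2.inl A B a
      set Y := nilProd2.inr A B n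
      set Z := nilProd2.inr A B b
      have hK : ⁅Y, X⁆ ∈ C := Subgroup.commutator_mem_commutator ⟨n, rfl⟩ ⟨a, rfl⟩
      refine ⟨a, n * b, ⁅Y, X⁆ * c, mul_mem hK hc, ?_⟩
      have h0 : (QuotientGroup.mk' ((⊤ : Subgroup (Monoid.Coprod A B)).lowerCentralSeries 2))
          (Monoid.Coprod.inr n * x) = Y *
          (QuotientGroup.mk' ((⊤ : Subgroup (Monoid.Coprod A B)).lowerCentralSeries 2)) x := by
        rw [map_mul]; rfl
      rw [h0, hx, map_mul]
      calc Y * (X * Z * c) = ⁅Y, X⁆ * (X * (Y * Z) * c) := by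
            rw [commutatorElement_def]; group
        _ = X * (Y * Z) * (⁅Y, X⁆ * c) := by
            rw [← mul_assoc, nilProd2.central Y X (X * (Y * Z)), mul_assoc]
  obtain ⟨a, b, c, hc, hg⟩ := ex
  -- projections kill C
  have hCA : ∀ x ∈ C, nilProd2.projA (B := B) hA x = 1 := by
    have hle : C ≤ (nilProd2.projA (B := B) hA).ker := by
      refine Subgroup.commutator_le.mpr ?_
      rintro y ⟨n, rfl⟩ z ⟨m, rfl⟩
      simp [MonoidHom.mem_ker, map_commutatorElement]
    exact fun x hx => hle hx
  have hCB : ∀ x ∈ C, nilProd2.projB (A := A) hB x = 1 := by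
    have hle : C ≤ (nilProd2.projB (A := A) hB).ker := by
      refine Subgroup.commutator_le.mpr ?_
      rintro y ⟨n, rfl⟩ z ⟨m, rfl⟩
      simp [MonoidHom.mem_ker, map_commutatorElement]
    exact fun x hx => hle hx
  refine ⟨⟨a, b, ⟨c, hc⟩⟩, hg, ?_⟩
  rintro ⟨a', b', c'⟩ h'
  have ha : a' = a := by
    have h1 := congrArg (nilProd2.projA (B := B) hA) (h'.symm.trans hg)
    simpa [map_mul, hCA c hc, hCA c'.1 c'.2] using h1
  have hb : b' = b := by
    have h1 := congrArg (nilProd2.projB (A := A) hB) (h'.symm.trans hg)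
    simpa [map_mul, hCB c hc, hCB c'.1 c'.2] using h1
  subst ha hb
  have hcc : (c' : nilProd2 A B) = c := by
    have h1 := h'.symm.trans hg
    exact mul_left_cancel h1
  refine Prod.ext rfl (Prod.ext rfl ?_)
  exact Subtype.ext hcc
end

section
/- Let A and B be nilpotent groups of class at most 2 and let G be their 2-nilpotent product. Multiplication in G in the normal form satisfies (α₁β₁γ₁)(α₂β₂γ₂) = (α₁α₂)(β₁β₂)(γ₁γ₂[β₁,α₂]), where αᵢ ∈ A, βᵢ ∈ B, γᵢ ∈ [B,A]. -/
open scoped commutatorElement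

lemma nilProd2.comm_central (A B : Type) [Group A] [Group B]
    (x y z : nilProd2 A B) : ⁅⁅x, y⁆, z⁆ = 1 := by
  obtain ⟨x, rfl⟩ := QuotientGroup.mk_surjective x
  obtain ⟨y, rfl⟩ := QuotientGroup.mk_surjective y
  obtain ⟨z, rfl⟩ := QuotientGroup.mk_surjective z
  have h : ⁅⁅(x : nilProd2 A B), ((y : Monoid.Coprod A B) : nilProd2 A B)⁆,
        ((z : Monoid.Coprod A B) : nilProd2 A B)⁆
      = ((⁅⁅x, y⁆, z⁆ : Monoid.Coprod A B) : nilProd2 A B) := by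
    simp only [← QuotientGroup.mk'_apply, map_commutatorElement]
  rw [h, QuotientGroup.eq_one_iff]
  exact Subgroup.commutator_mem_commutator
    (Subgroup.commutator_mem_commutator (Subgroup.mem_top _) (Subgroup.mem_top _))
    (Subgroup.mem_top _)

lemma nilProd2.commutator_le_center (A B : Type) [Group A] [Group B] :
    (commutator (nilProd2 A B)) ≤ Subgroup.center (nilProd2 A B) := by
  rw [commutator_def, Subgroup.commutator_le]
  intro x _ y _
  rw [Subgroup.mem_center_iff]
  intro g
  have := nilProd2.comm_central A B x y g
  rw [commutatorElement_eq_one_iff_commute] at this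
  exact this.symm.eq

/-- the multiplication rule for normal forms in the 2-nilpotent
product: `(α₁β₁γ₁)(α₂β₂γ₂) = (α₁α₂)(β₁β₂)(γ₁γ₂[β₁,α₂])`. -/
theorem stmt_4 (A B : Type) [Group A] [Group B]
    (hA : (⊤ : Subgroup A).lowerCentralSeries 2 = ⊥) (hB : (⊤ : Subgroup B).lowerCentralSeries 2 = ⊥)
    (α₁ α₂ : A) (β₁ β₂ : B) (γ₁ γ₂ : nilProd2 A B)
    (h₁ : γ₁ ∈ (⁅(nilProd2.inr A B).range, (nilProd2.inl A B).range⁆ : Subgroup (nilProd2 A B)))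
    (h₂ : γ₂ ∈ (⁅(nilProd2.inr A B).range, (nilProd2.inl A B).range⁆ : Subgroup (nilProd2 A B))) :
    (nilProd2.inl A B α₁ * nilProd2.inr A B β₁ * γ₁) *
      (nilProd2.inl A B α₂ * nilProd2.inr A B β₂ * γ₂) =
    nilProd2.inl A B (α₁ * α₂) * nilProd2.inr A B (β₁ * β₂) *
      (γ₁ * γ₂ * ⁅nilProd2.inr A B β₁, nilProd2.inl A B α₂⁆) := by
  set a₁ := nilProd2.inl A B α₁ with ha₁
  set a₂ := nilProd2.inl A B α₂ with ha₂
  set b₁ := nilProd2.inr A B β₁ with hb₁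
  set b₂ := nilProd2.inr A B β₂ with hb₂
  set c := ⁅b₁, a₂⁆ with hcdef
  have hle : (⁅(nilProd2.inr A B).range, (nilProd2.inl A B).range⁆ : Subgroup (nilProd2 A B))
      ≤ Subgroup.center (nilProd2 A B) :=
    le_trans (Subgroup.commutator_mono le_top le_top) (nilProd2.commutator_le_center A B)
  have hγ₁ : ∀ g, g * γ₁ = γ₁ * g := fun g => (Subgroup.mem_center_iff.mp (hle h₁)) g
  have hγ₂ : ∀ g, g * γ₂ = γ₂ * g := fun g => (Subgroup.mem_center_iff.mp (hle h₂)) g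
  have hc : ∀ g, g * c = c * g := by
    intro g
    have := nilProd2.comm_central A B b₁ a₂ g
    rw [commutatorElement_eq_one_iff_commute] at this
    exact this.symm.eq
  have hγ₁' : ∀ g x, γ₁ * (g * x) = g * (γ₁ * x) := by
    intro g x; rw [← mul_assoc, ← hγ₁, mul_assoc]
  have hc' : ∀ g x, c * (g * x) = g * (c * x) := by
    intro g x; rw [← mul_assoc, ← hc, mul_assoc]
  have hba : b₁ * a₂ = a₂ * b₁ * c := by
    rw [hc (a₂ * b₁), hcdef, commutatorElement_def]; group
  have hba' : ∀ x, b₁ * (a₂ * x) = a₂ * (b₁ * (c * x)) := by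
    intro x; rw [← mul_assoc, hba, mul_assoc, mul_assoc]
  rw [map_mul, map_mul]
  simp only [mul_assoc]
  rw [hγ₁' a₂, hγ₁' b₂, hba', hc' b₂, hc' γ₁, hγ₂ c]
end

section
/- Let A and B be groups of class at most 2 and odd exponent n, i.e., every element satisfies x^n = 1. Then their 2-nilpotent product G also has exponent dividing n. -/
open scoped commutatorElement

private lemma aux_pow_mul {G : Type*} [Group G] (hc : ∀ x y z : G, ⁅⁅x,y⁆,z⁆ = 1)
    (x y : G) : ∀ k : ℕ, y ^ k * x = ⁅y,x⁆ ^ k * (x * y ^ k) := by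
  have hce : ∀ z : G, Commute ⁅y,x⁆ z := fun z =>
    commutatorElement_eq_one_iff_commute.mp (hc y x z)
  have hmove : ∀ (j : ℕ) (a b : G), a * (⁅y,x⁆ ^ j * b) = ⁅y,x⁆ ^ j * (a * b) := by
    intro j a b
    rw [← mul_assoc, ← ((hce a).pow_left j).eq, mul_assoc]
  have hyx : y * x = ⁅y,x⁆ * (x * y) := by rw [commutatorElement_def]; group
  intro k
  induction k with
  | zero => simp
  | succ k ih =>
    calc y ^ (k+1) * x = y * (y ^ k * x) := by rw [pow_succ', mul_assoc]
      _ = y * (⁅y,x⁆ ^ k * (x * y ^ k)) := by rw [ih]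
      _ = ⁅y,x⁆ ^ k * (y * (x * y ^ k)) := hmove k y (x * y ^ k)
      _ = ⁅y,x⁆ ^ k * ((y * x) * y ^ k) := by group
      _ = ⁅y,x⁆ ^ k * ((⁅y,x⁆ * (x * y)) * y ^ k) := by rw [hyx]
      _ = ⁅y,x⁆ ^ (k+1) * (x * y ^ (k+1)) := by rw [pow_succ, pow_succ]; group

private lemma aux_mul_pow {G : Type*} [Group G] (hc : ∀ x y z : G, ⁅⁅x,y⁆,z⁆ = 1)
    (x y : G) : ∀ k : ℕ, (x * y) ^ k = ⁅y,x⁆ ^ k.choose 2 * (x ^ k * y ^ k) := by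
  have hce : ∀ z : G, Commute ⁅y,x⁆ z := fun z =>
    commutatorElement_eq_one_iff_commute.mp (hc y x z)
  have hmove : ∀ (j : ℕ) (a b : G), a * (⁅y,x⁆ ^ j * b) = ⁅y,x⁆ ^ j * (a * b) := by
    intro j a b
    rw [← mul_assoc, ← ((hce a).pow_left j).eq, mul_assoc]
  intro k
  induction k with
  | zero => simp
  | succ k ih =>
    have hch : (k+1).choose 2 = k.choose 2 + k := by
      rw [Nat.choose_succ_succ, Nat.choose_one_right, Nat.add_comm]
    calc (x * y) ^ (k+1) = (x * y) ^ k * (x * y) := pow_succ _ _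
      _ = (⁅y,x⁆ ^ k.choose 2 * (x ^ k * y ^ k)) * (x * y) := by rw [ih]
      _ = ⁅y,x⁆ ^ k.choose 2 * (x ^ k * ((y ^ k * x) * y)) := by group
      _ = ⁅y,x⁆ ^ k.choose 2 * (x ^ k * ((⁅y,x⁆ ^ k * (x * y ^ k)) * y)) := by
          rw [aux_pow_mul hc x y k]
      _ = ⁅y,x⁆ ^ k.choose 2 * (x ^ k * (⁅y,x⁆ ^ k * ((x * y ^ k) * y))) := by
          rw [mul_assoc (⁅y,x⁆ ^ k)]
      _ = ⁅y,x⁆ ^ k.choose 2 * (⁅y,x⁆ ^ k * (x ^ k * ((x * y ^ k) * y))) := by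
          rw [hmove k (x ^ k) ((x * y ^ k) * y)]
      _ = ⁅y,x⁆ ^ (k+1).choose 2 * (x ^ (k+1) * y ^ (k+1)) := by
          rw [hch, pow_add, pow_succ, pow_succ]; group

private lemma aux_key {G : Type*} [Group G] (hc : ∀ x y z : G, ⁅⁅x,y⁆,z⁆ = 1)
    {n : ℕ} (hn : Odd n) {x y : G} (hx : x ^ n = 1) (hy : y ^ n = 1) :
    (x * y) ^ n = 1 := by
  obtain ⟨m, hm⟩ := hn
  have hcn : ⁅y,x⁆ ^ n = 1 := by
    have h := aux_pow_mul hc x y n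
    rw [hy, one_mul, mul_one] at h
    exact (right_eq_mul.mp h)
  have hch : n.choose 2 = n * m := by
    subst hm
    rw [Nat.choose_two_right, show 2 * m + 1 - 1 = 2 * m from by omega,
      show (2 * m + 1) * (2 * m) = (2 * m + 1) * m * 2 from by ring,
      Nat.mul_div_cancel _ two_pos]
  rw [aux_mul_pow hc x y n, hx, hy, hch, pow_mul, hcn, one_pow, one_mul, one_mul]

/-- if `A` and `B` have class at most 2 and odd exponent `n`, then
their 2-nilpotent product has exponent dividing `n`. -/
theorem stmt_6 (n : ℕ) (hn : Odd n) (A B : Type) [Group A] [Group B]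
    (hA : (⊤ : Subgroup A).lowerCentralSeries 2 = ⊥) (hB : (⊤ : Subgroup B).lowerCentralSeries 2 = ⊥)
    (hAe : ∀ a : A, a ^ n = 1) (hBe : ∀ b : B, b ^ n = 1) :
    ∀ g : nilProd2 A B, g ^ n = 1 := by
  set C := Monoid.Coprod A B
  have hc : ∀ x y z : nilProd2 A B, ⁅⁅x,y⁆,z⁆ = 1 := by
    intro x y z
    obtain ⟨a, rfl⟩ := QuotientGroup.mk'_surjective _ x
    obtain ⟨b, rfl⟩ := QuotientGroup.mk'_surjective _ y
    obtain ⟨c, rfl⟩ := QuotientGroup.mk'_surjective _ z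
    rw [← map_commutatorElement, ← map_commutatorElement]
    rw [← MonoidHom.mem_ker, QuotientGroup.ker_mk']
    have h1 : ⁅a,b⁆ ∈ (⊤ : Subgroup C).lowerCentralSeries 1 := by
      rw [show (1:ℕ) = 0 + 1 from rfl, Subgroup.lowerCentralSeries_succ]
      exact Subgroup.commutator_mem_commutator (Subgroup.mem_top _) (Subgroup.mem_top _)
    rw [show (2:ℕ) = 1 + 1 from rfl, Subgroup.lowerCentralSeries_succ]
    exact Subgroup.commutator_mem_commutator h1 (Subgroup.mem_top _)
  intro g
  obtain ⟨c, rfl⟩ := QuotientGroup.mk'_surjective _ g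
  induction c using Monoid.Coprod.induction_on with
  | inl a =>
    have : (QuotientGroup.mk' _) (Monoid.Coprod.inl a) = nilProd2.inl A B a := rfl
    rw [this, ← map_pow, hAe a, map_one]
  | inr b =>
    have : (QuotientGroup.mk' _) (Monoid.Coprod.inr b) = nilProd2.inr A B b := rfl
    rw [this, ← map_pow, hBe b, map_one]
  | mul x y hx hy =>
    rw [map_mul]
    exact aux_key hc hn hx hy
end

section
/- Let A and B be nontrivial groups of class at most 2 and odd prime exponent p, let H ≤ [A,A], K ≤ [B,B], φ : H → K an isomorphism, and G = A ∐²_φ B the amalgamated coproduct. Then the center of G equals its commutator subgroup: Z(G) = [G,G]. -/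
open scoped commutatorElement

/-! ### Auxiliary: the Heisenberg group over `ZMod p` -/

@[ext]
structure Heis (p : ℕ) where
  x : ZMod p
  y : ZMod p
  z : ZMod p

namespace Heis

variable {p : ℕ}

instance : Mul (Heis p) := ⟨fun a b => ⟨a.x + b.x, a.y + b.y, a.z + b.z + a.x * b.y⟩⟩
instance : One (Heis p) := ⟨⟨0, 0, 0⟩⟩
instance : Inv (Heis p) := ⟨fun a => ⟨-a.x, -a.y, -a.z + a.x * a.y⟩⟩

@[simp] lemma mul_x (a b : Heis p) : (a * b).x = a.x + b.x := rfl
@[simp] lemma mul_y (a b : Heis p) : (a * b).y = a.y + b.y := rfl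
@[simp] lemma mul_z (a b : Heis p) : (a * b).z = a.z + b.z + a.x * b.y := rfl
@[simp] lemma one_x : (1 : Heis p).x = 0 := rfl
@[simp] lemma one_y : (1 : Heis p).y = 0 := rfl
@[simp] lemma one_z : (1 : Heis p).z = 0 := rfl
@[simp] lemma inv_x (a : Heis p) : (a⁻¹).x = -a.x := rfl
@[simp] lemma inv_y (a : Heis p) : (a⁻¹).y = -a.y := rfl
@[simp] lemma inv_z (a : Heis p) : (a⁻¹).z = -a.z + a.x * a.y := rfl

instance : Group (Heis p) where
  mul_assoc a b c := by ext <;> simp <;> ring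
  one_mul a := by ext <;> simp
  mul_one a := by ext <;> simp
  inv_mul_cancel a := by ext <;> simp <;> ring

/-- First coordinate as a homomorphism. -/
def p1 : Heis p →* Multiplicative (ZMod p) where
  toFun a := Multiplicative.ofAdd a.x
  map_one' := rfl
  map_mul' a b := rfl

/-- Second coordinate as a homomorphism. -/
def p2 : Heis p →* Multiplicative (ZMod p) where
  toFun a := Multiplicative.ofAdd a.y
  map_one' := rfl
  map_mul' a b := rfl

@[simp] lemma p1_apply (a : Heis p) : p1 a = Multiplicative.ofAdd a.x := rfl
@[simp] lemma p2_apply (a : Heis p) : p2 a = Multiplicative.ofAdd a.y := rfl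

/-- Embedding of the "x"-axis from a character. -/
def mkA {A : Type} [Group A] (f : A →* Multiplicative (ZMod p)) : A →* Heis p where
  toFun a := ⟨(f a).toAdd, 0, 0⟩
  map_one' := by ext <;> simp
  map_mul' a b := by ext <;> simp

/-- Embedding of the "y"-axis from a character. -/
def mkB {B : Type} [Group B] (g : B →* Multiplicative (ZMod p)) : B →* Heis p where
  toFun b := ⟨0, (g b).toAdd, 0⟩
  map_one' := by ext <;> simp
  map_mul' a b := by ext <;> simp

@[simp] lemma mkA_x {A : Type} [Group A] (f : A →* Multiplicative (ZMod p)) (a : A) :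
    (mkA f a) = (⟨(f a).toAdd, 0, 0⟩ : Heis p) := rfl
@[simp] lemma mkB_y {B : Type} [Group B] (g : B →* Multiplicative (ZMod p)) (b : B) :
    (mkB g b) = (⟨0, (g b).toAdd, 0⟩ : Heis p) := rfl

lemma commutator_le_center : commutator (Heis p) ≤ Subgroup.center (Heis p) := by
  rw [commutator_def, Subgroup.commutator_le]
  intro a _ b _
  have hx : (⁅a, b⁆ : Heis p).x = 0 := by
    simp [commutatorElement_def]
  have hy : (⁅a, b⁆ : Heis p).y = 0 := by
    simp [commutatorElement_def]
  rw [Subgroup.mem_center_iff]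
  intro g
  ext <;> simp [hx, hy] <;> ring

lemma lcs2_eq_bot : (⊤ : Subgroup (Heis p)).lowerCentralSeries 2 = ⊥ := by
  show ⁅(⊤ : Subgroup (Heis p)).lowerCentralSeries 1, ⊤⁆ = ⊥
  rw [Subgroup.top_lowerCentralSeries_one, Subgroup.commutator_eq_bot_iff_le_centralizer]
  exact le_trans commutator_le_center (Subgroup.center_le_centralizer _)

end Heis


section AmalgamAux

variable (p : ℕ) (A B : Type) [Group A] [Group B]
  (H : Subgroup A) (K : Subgroup B) (φ : H ≃* K)

/-- The canonical projection from the free product to the amalgam. -/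
def amalgam.mk2 : Monoid.Coprod A B →* amalgam A B H K φ :=
  (QuotientGroup.mk' _).comp (QuotientGroup.mk' _)

lemma amalgam.mk2_surjective : Function.Surjective (amalgam.mk2 A B H K φ) :=
  (QuotientGroup.mk'_surjective _).comp (QuotientGroup.mk'_surjective _)

lemma amalgam.lcs2_le_ker :
    (⊤ : Subgroup (Monoid.Coprod A B)).lowerCentralSeries 2 ≤ (amalgam.mk2 A B H K φ).ker := by
  intro w hw
  have h1 : ((w : Monoid.Coprod A B) : nilProd2 A B) = 1 :=
    (QuotientGroup.eq_one_iff w).mpr hw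
  show ((QuotientGroup.mk' (amalgamRel A B H K φ)).comp (QuotientGroup.mk' _)) w = 1
  simp only [MonoidHom.comp_apply, QuotientGroup.mk'_apply]
  rw [show (QuotientGroup.mk w : nilProd2 A B) = 1 from h1]
  rfl

lemma amalgam.mk2_inl (a : A) :
    amalgam.mk2 A B H K φ (Monoid.Coprod.inl a) = amalgam.inl A B H K φ a := rfl

lemma amalgam.mk2_inr (b : B) :
    amalgam.mk2 A B H K φ (Monoid.Coprod.inr b) = amalgam.inr A B H K φ b := rfl

/-- Homomorphism extensionality for the amalgam. -/
lemma amalgam.hom_ext {P : Type*} [Monoid P] {χ₁ χ₂ : amalgam A B H K φ →* P}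
    (h1 : ∀ a : A, χ₁ (amalgam.inl A B H K φ a) = χ₂ (amalgam.inl A B H K φ a))
    (h2 : ∀ b : B, χ₁ (amalgam.inr A B H K φ b) = χ₂ (amalgam.inr A B H K φ b)) :
    χ₁ = χ₂ := by
  apply QuotientGroup.monoidHom_ext
  apply QuotientGroup.monoidHom_ext
  apply Monoid.Coprod.hom_ext
  · exact MonoidHom.ext fun a => h1 a
  · exact MonoidHom.ext fun b => h2 b

/-- Generation of the amalgam by the images of `A` and `B`. -/
lemma amalgam.mem_of_forall (D : Subgroup (amalgam A B H K φ))
    (h1 : ∀ a : A, amalgam.inl A B H K φ a ∈ D)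
    (h2 : ∀ b : B, amalgam.inr A B H K φ b ∈ D)
    (x : amalgam A B H K φ) : x ∈ D := by
  obtain ⟨w, rfl⟩ := amalgam.mk2_surjective A B H K φ x
  have key : (⊤ : Submonoid (Monoid.Coprod A B)) ≤
      Submonoid.comap (amalgam.mk2 A B H K φ) D.toSubmonoid := by
    rw [← Monoid.Coprod.mrange_inl_sup_mrange_inr]
    apply sup_le
    · rintro w ⟨a, rfl⟩; exact h1 a
    · rintro w ⟨b, rfl⟩; exact h2 b
  exact key (Submonoid.mem_top w)

variable [Fact p.Prime]

/-- The Heisenberg homomorphism on the amalgam induced by a pair of characters. -/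
def amalgam.heisHom (hH : H ≤ commutator A) (hK : K ≤ commutator B)
    (f : A →* Multiplicative (ZMod p)) (g : B →* Multiplicative (ZMod p)) :
    amalgam A B H K φ →* Heis p := by
  refine QuotientGroup.lift _ (QuotientGroup.lift _
      (Monoid.Coprod.lift (Heis.mkA f) (Heis.mkB g)) ?_) ?_
  · intro w hw
    have := Subgroup.lowerCentralSeries.map (Monoid.Coprod.lift (Heis.mkA f) (Heis.mkB g)) 2
      (Subgroup.mem_map_of_mem _ hw)
    rw [Heis.lcs2_eq_bot, Subgroup.mem_bot] at this
    simpa using this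
  · show amalgamRel A B H K φ ≤ MonoidHom.ker _
    rw [amalgamRel]
    apply Subgroup.normalClosure_le_normal
    rintro x ⟨h, rfl⟩
    have hfh : f (h : A) = 1 := Abelianization.commutator_subset_ker f (hH h.2)
    have hgh : g ((φ h : K) : B) = 1 := Abelianization.commutator_subset_ker g (hK (φ h).2)
    rw [SetLike.mem_coe, MonoidHom.mem_ker]
    show (QuotientGroup.lift _ _ _) ((QuotientGroup.mk' _) (Monoid.Coprod.inl (h : A))
        * ((QuotientGroup.mk' _) (Monoid.Coprod.inr ((φ h : K) : B)))⁻¹) = 1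
    rw [map_mul, map_inv, QuotientGroup.mk'_apply, QuotientGroup.mk'_apply,
      QuotientGroup.lift_mk, QuotientGroup.lift_mk,
      Monoid.Coprod.lift_apply_inl, Monoid.Coprod.lift_apply_inr]
    ext <;> simp [hfh, hgh]

lemma amalgam.heisHom_inl (hH : H ≤ commutator A) (hK : K ≤ commutator B)
    (f : A →* Multiplicative (ZMod p)) (g : B →* Multiplicative (ZMod p)) (a : A) :
    amalgam.heisHom p A B H K φ hH hK f g (amalgam.inl A B H K φ a) = Heis.mkA f a := by
  show amalgam.heisHom p A B H K φ hH hK f g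
    (QuotientGroup.mk (QuotientGroup.mk (Monoid.Coprod.inl a))) = _
  rw [amalgam.heisHom, QuotientGroup.lift_mk, QuotientGroup.lift_mk,
    Monoid.Coprod.lift_apply_inl]

lemma amalgam.heisHom_inr (hH : H ≤ commutator A) (hK : K ≤ commutator B)
    (f : A →* Multiplicative (ZMod p)) (g : B →* Multiplicative (ZMod p)) (b : B) :
    amalgam.heisHom p A B H K φ hH hK f g (amalgam.inr A B H K φ b) = Heis.mkB g b := by
  show amalgam.heisHom p A B H K φ hH hK f g
    (QuotientGroup.mk (QuotientGroup.mk (Monoid.Coprod.inr b))) = _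
  rw [amalgam.heisHom, QuotientGroup.lift_mk, QuotientGroup.lift_mk,
    Monoid.Coprod.lift_apply_inr]

end AmalgamAux
section Characters

variable (p : ℕ) [Fact p.Prime] (C : Type) [Group C]

lemma char_sep_core (V : Type) [AddCommGroup V] [Module (ZMod p) V] (v : V)
    (h : ∀ ψ : V →+ ZMod p, ψ v = 0) : v = 0 :=
  (Module.forall_dual_apply_eq_zero_iff (ZMod p) v).mp fun ψ => h ψ.toAddMonoidHom

lemma char_eq_one_iff_mem_commutator (hexp : ∀ y : Abelianization C, y ^ p = 1) (c : C) :
    (∀ χ : C →* Multiplicative (ZMod p), χ c = 1) ↔ c ∈ commutator C := by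
  constructor
  · intro hc
    have hv : ∀ ψ : Additive (Abelianization C) →+ ZMod p,
        ψ (Additive.ofMul (Abelianization.of c)) = 0 := by
      intro ψ
      have hχ := hc
        { toFun := fun d => Multiplicative.ofAdd (ψ (Additive.ofMul (Abelianization.of d)))
          map_one' := by simp
          map_mul' := by intro d e; simp [ofMul_mul] }
      simpa using hχ
    letI : Module (ZMod p) (Additive (Abelianization C)) := AddCommGroup.zmodModule (by
      intro x
      rw [show x = Additive.ofMul x.toMul from rfl, ← ofMul_pow, hexp, ofMul_one])
    have hv0 := char_sep_core p (Additive (Abelianization C))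
      (Additive.ofMul (Abelianization.of c)) hv
    have : Abelianization.of c = 1 := by simpa using hv0
    exact (QuotientGroup.eq_one_iff c).mp this
  · intro hc χ
    exact Abelianization.commutator_subset_ker χ hc

lemma exists_char_ne_one [Nontrivial C] (hC : (⊤ : Subgroup C).lowerCentralSeries 2 = ⊥)
    (hCe : ∀ c : C, c ^ p = 1) :
    ∃ (f : C →* Multiplicative (ZMod p)) (c : C), f c ≠ 1 := by
  have hexp : ∀ y : Abelianization C, y ^ p = 1 := by
    intro y
    obtain ⟨c, rfl⟩ := QuotientGroup.mk_surjective y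
    show (Abelianization.of c) ^ p = 1
    rw [← map_pow, hCe, map_one]
  have hne : commutator C ≠ ⊤ := by
    intro h
    have h2 : (⊤ : Subgroup C).lowerCentralSeries 2 = ⊤ := by
      show ⁅(⊤ : Subgroup C).lowerCentralSeries 1, ⊤⁆ = ⊤
      rw [Subgroup.top_lowerCentralSeries_one, h, ← commutator_def, h]
    obtain ⟨c, hc⟩ := exists_ne (1 : C)
    have hmem : c ∈ (⊤ : Subgroup C).lowerCentralSeries 2 := by rw [h2]; exact Subgroup.mem_top c
    rw [hC] at hmem
    exact hc (Subgroup.mem_bot.mp hmem)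
  obtain ⟨c0, hc0⟩ : ∃ c, c ∉ commutator C := by
    by_contra hcon
    push_neg at hcon
    exact hne (top_unique fun x _ => hcon x)
  by_contra hcon
  push_neg at hcon
  exact hc0 ((char_eq_one_iff_mem_commutator p C hexp c0).mp fun χ => hcon χ c0)

end Characters

section Central

variable (p : ℕ) [Fact p.Prime] (A B : Type) [Group A] [Group B]
  (H : Subgroup A) (K : Subgroup B) (φ : H ≃* K)
  (hH : H ≤ commutator A) (hK : K ≤ commutator B)

lemma amalgam.center_x (f : A →* Multiplicative (ZMod p)) (g : B →* Multiplicative (ZMod p))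
    {ζ : amalgam A B H K φ} (hζ : ζ ∈ Subgroup.center (amalgam A B H K φ)) (b : B) :
    (amalgam.heisHom p A B H K φ hH hK f g ζ).x * (g b).toAdd = 0 := by
  have hc := Subgroup.mem_center_iff.mp hζ (amalgam.inr A B H K φ b)
  have h2 := congrArg (amalgam.heisHom p A B H K φ hH hK f g) hc
  rw [map_mul, map_mul, amalgam.heisHom_inr] at h2
  have hz := congrArg Heis.z h2
  simp only [Heis.mul_z, Heis.mkB_y] at hz
  simp only [zero_add, add_zero, zero_mul, mul_zero] at hz
  -- hz : u.z = u.z + u.x * (g b).toAdd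
  exact (left_eq_add.mp hz)

lemma amalgam.center_y (f : A →* Multiplicative (ZMod p)) (g : B →* Multiplicative (ZMod p))
    {ζ : amalgam A B H K φ} (hζ : ζ ∈ Subgroup.center (amalgam A B H K φ)) (a : A) :
    (f a).toAdd * (amalgam.heisHom p A B H K φ hH hK f g ζ).y = 0 := by
  have hc := Subgroup.mem_center_iff.mp hζ (amalgam.inl A B H K φ a)
  have h2 := congrArg (amalgam.heisHom p A B H K φ hH hK f g) hc
  rw [map_mul, map_mul, amalgam.heisHom_inl] at h2
  have hz := congrArg Heis.z h2
  simp only [Heis.mul_z, Heis.mkA_x] at hz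
  simp only [zero_add, add_zero, zero_mul, mul_zero] at hz
  -- hz : u.z + (f a).toAdd * u.y = u.z
  exact (add_eq_left.mp hz)

end Central
/-- for nontrivial `A`, `B` of class at most 2 and odd prime
exponent `p`, the amalgamated coproduct `G` satisfies `Z(G) = [G,G]`. -/
theorem stmt_9 (p : ℕ) (hp : p.Prime) (hodd : Odd p)
    (A B : Type) [Group A] [Group B] [Nontrivial A] [Nontrivial B]
    (hA : (⊤ : Subgroup A).lowerCentralSeries 2 = ⊥) (hB : (⊤ : Subgroup B).lowerCentralSeries 2 = ⊥)
    (hAe : ∀ a : A, a ^ p = 1) (hBe : ∀ b : B, b ^ p = 1)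
    (H : Subgroup A) (K : Subgroup B)
    (hH : H ≤ commutator A) (hK : K ≤ commutator B) (φ : H ≃* K) :
    Subgroup.center (amalgam A B H K φ) = commutator (amalgam A B H K φ) := by
  haveI : Fact p.Prime := ⟨hp⟩
  have hcz : commutator (amalgam A B H K φ) ≤ Subgroup.center (amalgam A B H K φ) := by
    rw [commutator_def, Subgroup.commutator_le]
    intro x _ y _
    rw [Subgroup.mem_center_iff]
    intro z
    obtain ⟨x', rfl⟩ := amalgam.mk2_surjective A B H K φ x
    obtain ⟨y', rfl⟩ := amalgam.mk2_surjective A B H K φ y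
    obtain ⟨z', rfl⟩ := amalgam.mk2_surjective A B H K φ z
    have hmem : ⁅⁅x', y'⁆, z'⁆ ∈ (⊤ : Subgroup (Monoid.Coprod A B)).lowerCentralSeries 2 := by
      show _ ∈ ⁅(⊤ : Subgroup (Monoid.Coprod A B)).lowerCentralSeries 1, ⊤⁆
      refine Subgroup.commutator_mem_commutator ?_ (Subgroup.mem_top _)
      rw [Subgroup.top_lowerCentralSeries_one]
      exact Subgroup.commutator_mem_commutator (Subgroup.mem_top _) (Subgroup.mem_top _)
    have h1 : amalgam.mk2 A B H K φ ⁅⁅x', y'⁆, z'⁆ = 1 :=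
      amalgam.lcs2_le_ker A B H K φ hmem
    rw [map_commutatorElement, map_commutatorElement] at h1
    exact (commutatorElement_eq_one_iff_mul_comm.mp h1).symm
  have hzc : Subgroup.center (amalgam A B H K φ) ≤ commutator (amalgam A B H K φ) := by
    intro ζ hζ
    obtain ⟨f0, a0, hf0⟩ := exists_char_ne_one p A hA hAe
    obtain ⟨g0, b0, hg0⟩ := exists_char_ne_one p B hB hBe
    have hexp : ∀ y : Abelianization (amalgam A B H K φ), y ^ p = 1 := by
      intro y
      obtain ⟨g, rfl⟩ := QuotientGroup.mk_surjective y
      show (Abelianization.of g) ^ p = 1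
      let T : Subgroup (amalgam A B H K φ) :=
        { carrier := {x | (Abelianization.of x) ^ p = 1}
          one_mem' := by simp
          mul_mem' := by
            intro u v hu hv
            simp only [Set.mem_setOf_eq, map_mul, mul_pow] at *
            rw [hu, hv, one_mul]
          inv_mem' := by
            intro u hu
            simp only [Set.mem_setOf_eq, map_inv, inv_pow] at *
            rw [hu, inv_one] }
      refine amalgam.mem_of_forall A B H K φ T ?_ ?_ g
      · intro a
        show (Abelianization.of (amalgam.inl A B H K φ a)) ^ p = 1
        rw [← map_pow, ← map_pow, hAe, map_one, map_one]
      · intro b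
        show (Abelianization.of (amalgam.inr A B H K φ b)) ^ p = 1
        rw [← map_pow, ← map_pow, hBe, map_one, map_one]
    apply (char_eq_one_iff_mem_commutator p _ hexp ζ).mp
    intro χ
    set F1 := amalgam.heisHom p A B H K φ hH hK (χ.comp (amalgam.inl A B H K φ)) g0 with hF1
    set F2 := amalgam.heisHom p A B H K φ hH hK f0 (χ.comp (amalgam.inr A B H K φ)) with hF2
    have hdec : χ = (Heis.p1.comp F1) * (Heis.p2.comp F2) := by
      apply amalgam.hom_ext
      · intro a
        rw [MonoidHom.mul_apply, MonoidHom.comp_apply, MonoidHom.comp_apply,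
          hF1, hF2, amalgam.heisHom_inl, amalgam.heisHom_inl]
        simp
      · intro b
        rw [MonoidHom.mul_apply, MonoidHom.comp_apply, MonoidHom.comp_apply,
          hF1, hF2, amalgam.heisHom_inr, amalgam.heisHom_inr]
        simp
    have hb0 : (g0 b0).toAdd ≠ 0 := by simpa using hg0
    have ha0 : (f0 a0).toAdd ≠ 0 := by simpa using hf0
    have hx : (F1 ζ).x = 0 := by
      have h := amalgam.center_x p A B H K φ hH hK
        (χ.comp (amalgam.inl A B H K φ)) g0 hζ b0
      rcases mul_eq_zero.mp h with h | h
      · exact h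
      · exact absurd h hb0
    have hy : (F2 ζ).y = 0 := by
      have h := amalgam.center_y p A B H K φ hH hK
        f0 (χ.comp (amalgam.inr A B H K φ)) hζ a0
      rcases mul_eq_zero.mp h with h | h
      · exact absurd h ha0
      · exact h
    rw [hdec, MonoidHom.mul_apply, MonoidHom.comp_apply, MonoidHom.comp_apply,
      Heis.p1_apply, Heis.p2_apply, hx, hy]
    simp
  exact le_antisymm hzc hcz
end

section
/- Let A and B be nontrivial groups of class at most 2 and odd prime exponent p, and let G = A ∐²_φ B be an amalgamated coproduct along an isomorphism φ : H → K with H ≤ [A,A], K ≤ [B,B]. If G = CD with subgroups C, D satisfying [C,D] = 1, then C ⊆ D or D ⊆ C; i.e., G admits no nontrivial central product decomposition. -/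
open scoped commutatorElement

namespace Stmt10

open Pointwise


/-! ### Heisenberg group over a commutative ring -/

@[ext]
structure Heis (R : Type) [CommRing R] where
  x : R
  y : R
  z : R

namespace Heis

variable {R : Type} [CommRing R]

instance : Mul (Heis R) := ⟨fun a b => ⟨a.x + b.x, a.y + b.y, a.z + b.z + a.x * b.y⟩⟩
instance : One (Heis R) := ⟨⟨0, 0, 0⟩⟩
instance : Inv (Heis R) := ⟨fun a => ⟨-a.x, -a.y, -a.z + a.x * a.y⟩⟩

@[simp] lemma mul_x' (a b : Heis R) : (a * b).x = a.x + b.x := rfl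
@[simp] lemma mul_y' (a b : Heis R) : (a * b).y = a.y + b.y := rfl
@[simp] lemma mul_z' (a b : Heis R) : (a * b).z = a.z + b.z + a.x * b.y := rfl
@[simp] lemma one_x' : (1 : Heis R).x = 0 := rfl
@[simp] lemma one_y' : (1 : Heis R).y = 0 := rfl
@[simp] lemma one_z' : (1 : Heis R).z = 0 := rfl
@[simp] lemma inv_x' (a : Heis R) : a⁻¹.x = -a.x := rfl
@[simp] lemma inv_y' (a : Heis R) : a⁻¹.y = -a.y := rfl
@[simp] lemma inv_z' (a : Heis R) : a⁻¹.z = -a.z + a.x * a.y := rfl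

instance : Group (Heis R) where
  mul_assoc a b c := by ext <;> simp <;> ring
  one_mul a := by ext <;> simp
  mul_one a := by ext <;> simp
  inv_mul_cancel a := by ext <;> simp


lemma commutator_eq (a b : Heis R) : ⁅a, b⁆ = ⟨0, 0, a.x * b.y - b.x * a.y⟩ := by
  show a * b * a⁻¹ * b⁻¹ = _
  ext <;> simp <;> ring

lemma triple_commutator (a b c : Heis R) : ⁅⁅a, b⁆, c⁆ = 1 := by
  rw [commutator_eq, commutator_eq]
  show Heis.mk _ _ _ = Heis.mk _ _ _
  ext <;> simp

/-- The embedding of the additive group `R` into the `x`-coordinate. -/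
def mkX : Multiplicative R →* Heis R where
  toFun r := ⟨r.toAdd, 0, 0⟩
  map_one' := rfl
  map_mul' a b := by ext <;> simp

/-- The embedding of the additive group `R` into the `y`-coordinate. -/
def mkY : Multiplicative R →* Heis R where
  toFun r := ⟨0, r.toAdd, 0⟩
  map_one' := rfl
  map_mul' a b := by ext <;> simp

/-- The `x`-coordinate as a homomorphism. -/
def xHom : Heis R →* Multiplicative R :=
  MonoidHom.mk' (fun a => Multiplicative.ofAdd a.x) (fun a b => by simp [ofAdd_add])

/-- The `y`-coordinate as a homomorphism. -/
def yHom : Heis R →* Multiplicative R :=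
  MonoidHom.mk' (fun a => Multiplicative.ofAdd a.y) (fun a b => by simp [ofAdd_add])

@[simp] lemma mkX_apply (r : Multiplicative R) : mkX r = ⟨r.toAdd, 0, 0⟩ := rfl
@[simp] lemma mkY_apply (r : Multiplicative R) : mkY r = ⟨0, r.toAdd, 0⟩ := rfl
@[simp] lemma xHom_apply (a : Heis R) : xHom a = Multiplicative.ofAdd a.x := rfl
@[simp] lemma yHom_apply (a : Heis R) : yHom a = Multiplicative.ofAdd a.y := rfl

end Heis


variable {p : ℕ} {M : Type} [CommGroup M]

/-- Separation: if every `ZMod p`-character kills `m`, then `m = 1`. -/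
lemma ann (hp : p.Prime) (hM : ∀ m : M, m ^ p = 1) {m : M}
    (h : ∀ f : M →* Multiplicative (ZMod p), (f m).toAdd = 0) : m = 1 := by
  haveI := Fact.mk hp
  haveI inst : Module (ZMod p) (Additive M) := AddCommGroup.zmodModule (fun x => by
    apply Additive.toMul.injective
    rw [toMul_nsmul]
    exact hM _)
  have hd : ∀ f0 : Module.Dual (ZMod p) (Additive M), f0 (Additive.ofMul m) = 0 := by
    intro f0
    have := h (MonoidHom.mk' (fun x => Multiplicative.ofAdd (f0 (Additive.ofMul x)))
      (fun a b => by
        show Multiplicative.ofAdd (f0 (Additive.ofMul (a * b))) = _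
        rw [← ofAdd_add, ← map_add]
        rfl))
    simpa using this
  have := (Module.forall_dual_apply_eq_zero_iff (ZMod p) (Additive.ofMul m)).mp hd
  exact Additive.ofMul.injective (by simpa using this)

/-- If `m ≠ 1` then some character takes value `1` on `m`. -/
lemma sep (hp : p.Prime) (hM : ∀ m : M, m ^ p = 1) {m : M} (hm : m ≠ 1) :
    ∃ f : M →* Multiplicative (ZMod p), (f m).toAdd = 1 := by
  haveI := Fact.mk hp
  have h : ¬∀ f : M →* Multiplicative (ZMod p), (f m).toAdd = 0 := fun h => hm (ann hp hM h)
  push_neg at h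
  obtain ⟨f, hf⟩ := h
  refine ⟨(AddMonoidHom.toMultiplicative (AddMonoidHom.mulLeft ((f m).toAdd)⁻¹)).comp f, ?_⟩
  show ((f m).toAdd⁻¹ * (f m).toAdd) = 1
  exact inv_mul_cancel₀ hf

/-- If `m'` is not a power of `m`, some character kills `m` and takes value `1` on `m'`. -/
lemma sep2 (hp : p.Prime) (hM : ∀ m : M, m ^ p = 1) {m m' : M}
    (h : ∀ k : ℤ, m ^ k ≠ m') :
    ∃ f : M →* Multiplicative (ZMod p), (f m).toAdd = 0 ∧ (f m').toAdd = 1 := by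
  haveI := Fact.mk hp
  set N := Subgroup.zpowers m with hN
  have hm' : ((m' : M ⧸ N)) ≠ 1 := by
    intro h1
    rw [QuotientGroup.eq_one_iff] at h1
    obtain ⟨k, hk⟩ := Subgroup.mem_zpowers_iff.mp h1
    exact h k hk
  have hMq : ∀ x : M ⧸ N, x ^ p = 1 := by
    intro x
    refine QuotientGroup.induction_on x (fun z => ?_)
    rw [← QuotientGroup.mk_pow, hM z]
    rfl
  obtain ⟨f, hf⟩ := sep hp hMq hm'
  refine ⟨f.comp (QuotientGroup.mk' N), ?_, hf⟩
  have h1 : ((m : M ⧸ N)) = 1 := (QuotientGroup.eq_one_iff m).mpr (Subgroup.mem_zpowers m)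
  show (f ((m : M ⧸ N))).toAdd = 0
  rw [h1, map_one]
  rfl

/-- In a group of exponent `p`, a nontrivial element to the power `c.val` is trivial
only for `c = 0`. -/
lemma pow_val_eq_one_iff (hp : p.Prime) {m : M} (hMm : m ^ p = 1) (hm : m ≠ 1)
    {c : ZMod p} (h : m ^ c.val = 1) : c = 0 := by
  haveI := Fact.mk hp
  haveI : NeZero p := ⟨hp.ne_zero⟩
  have ho : orderOf m = p := by
    rcases (Nat.Prime.eq_one_or_self_of_dvd hp _ (orderOf_dvd_of_pow_eq_one hMm)) with h1 | h1
    · exact absurd (orderOf_eq_one_iff.mp h1) hm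
    · exact h1
  have hdvd : orderOf m ∣ c.val := orderOf_dvd_of_pow_eq_one h
  rw [ho] at hdvd
  have := Nat.eq_zero_of_dvd_of_lt hdvd (ZMod.val_lt c)
  · exact (ZMod.val_eq_zero c).mp (by omega)

/-- Powers with congruent (mod `p`) natural exponents agree. -/
lemma pow_congr {m : M} (hMm : m ^ p = 1) {a b : ℕ}
    (h : (a : ZMod p) = b) : m ^ a = m ^ b := by
  have hmod : a ≡ b [MOD p] := (ZMod.natCast_eq_natCast_iff a b p).mp h
  have hmod' : a % orderOf m = b % orderOf m :=
    Nat.ModEq.of_dvd (orderOf_dvd_of_pow_eq_one hMm) hmod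
  rw [← pow_mod_orderOf m a, ← pow_mod_orderOf m b, hmod']

/-- Converting an integer power into a natural power of the `ZMod p` value. -/
lemma zpow_congr (hp : p.Prime) {m : M} (hMm : m ^ p = 1) (k : ℤ) :
    m ^ k = m ^ ((k : ZMod p).val) := by
  haveI := Fact.mk hp
  haveI : NeZero p := ⟨hp.ne_zero⟩
  have hcast : ((((k : ZMod p).val : ℤ) - k : ℤ) : ZMod p) = 0 := by
    push_cast
    rw [ZMod.natCast_val, ZMod.cast_id]
    ring
  obtain ⟨t, ht⟩ := (ZMod.intCast_zmod_eq_zero_iff_dvd _ p).mp hcast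
  have hval : (((k : ZMod p).val : ℤ)) = k + p * t := by linarith [ht]
  calc m ^ k = m ^ k * ((m ^ p) ^ t) := by rw [hMm, one_zpow, mul_one]
    _ = m ^ (k + (p : ℤ) * t) := by rw [zpow_add, ← zpow_natCast m p, ← zpow_mul]
    _ = m ^ (((k : ZMod p).val : ℤ)) := by rw [← hval]
    _ = m ^ ((k : ZMod p).val) := zpow_natCast _ _
/-- The key linear-algebra fact: an "orthogonal" pair of subgroups generating
`U × W` must have a trivial member. -/
lemma core (hp : p.Prime) {U W : Type} [CommGroup U] [CommGroup W]
    [Nontrivial U] [Nontrivial W]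
    (hU : ∀ u : U, u ^ p = 1) (hW : ∀ w : W, w ^ p = 1)
    (P Q : Subgroup (U × W)) (hPQ : P ⊔ Q = ⊤)
    (orth : ∀ u ∈ P, ∀ v ∈ Q, ∀ (f : U →* Multiplicative (ZMod p))
      (g : W →* Multiplicative (ZMod p)),
      (f u.1).toAdd * (g v.2).toAdd = (f v.1).toAdd * (g u.2).toAdd) :
    P = ⊥ ∨ Q = ⊥ := by
  haveI := Fact.mk hp
  haveI : NeZero p := ⟨hp.ne_zero⟩
  haveI := Fact.mk hp.one_lt
  by_contra hcon
  push_neg at hcon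
  obtain ⟨hP, hQ⟩ := hcon
  have annU : ∀ u : U, (∀ f : U →* Multiplicative (ZMod p), (f u).toAdd = 0) → u = 1 :=
    fun u h => ann hp hU h
  have annW : ∀ w : W, (∀ g : W →* Multiplicative (ZMod p), (g w).toAdd = 0) → w = 1 :=
    fun w h => ann hp hW h
  have FpowU : ∀ (f : U →* Multiplicative (ZMod p)) (u : U) (c : ZMod p),
      (f (u ^ c.val)).toAdd = c * (f u).toAdd := by
    intro f u c
    rw [map_pow, toAdd_pow, nsmul_eq_mul, ZMod.natCast_val, ZMod.cast_id]
  have FpowW : ∀ (g : W →* Multiplicative (ZMod p)) (w : W) (c : ZMod p),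
      (g (w ^ c.val)).toAdd = c * (g w).toAdd := by
    intro g w c
    rw [map_pow, toAdd_pow, nsmul_eq_mul, ZMod.natCast_val, ZMod.cast_id]
  have scalW : ∀ (c : ZMod p) (w : W), w ≠ 1 →
      (∀ g : W →* Multiplicative (ZMod p), c * (g w).toAdd = 0) → c = 0 := by
    intro c w hw h
    refine pow_val_eq_one_iff hp (hW w) hw (annW _ (fun g => ?_))
    rw [FpowW g w c]
    exact h g
  have elemU : ∀ (u u' : U),
      (∀ f : U →* Multiplicative (ZMod p), (f u).toAdd = (f u').toAdd) → u = u' := by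
    intro u u' h
    have h1 : u * u'⁻¹ = 1 := annU _ (fun f => by
      rw [map_mul, map_inv, toAdd_mul, toAdd_inv, h f]
      ring)
    exact mul_inv_eq_one.mp h1
  have elemW : ∀ (w w' : W),
      (∀ g : W →* Multiplicative (ZMod p), (g w).toAdd = (g w').toAdd) → w = w' := by
    intro w w' h
    have h1 : w * w'⁻¹ = 1 := annW _ (fun g => by
      rw [map_mul, map_inv, toAdd_mul, toAdd_inv, h g]
      ring)
    exact mul_inv_eq_one.mp h1
  by_cases hPa : ∃ u ∈ P, u.1 ≠ 1
  · by_cases hQy : ∃ v ∈ Q, v.2 ≠ 1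
    · -- Case A
      obtain ⟨u, hu, hu1⟩ := hPa
      obtain ⟨v, hv, hv2⟩ := hQy
      obtain ⟨f₀, hf₀⟩ := sep hp hU hu1
      set α : ZMod p := (f₀ v.1).toAdd with hαdef
      have step1 : v.2 = u.2 ^ α.val := by
        apply elemW
        intro g
        have ho := orth u hu v hv f₀ g
        rw [hf₀, one_mul] at ho
        rw [FpowW g u.2 α]
        exact ho
      have hb : u.2 ≠ 1 := by
        intro hb1
        apply hv2
        rw [step1, hb1, one_pow]
      have hα : α ≠ 0 := by
        intro h0
        apply hv2
        rw [step1, h0, ZMod.val_zero, pow_zero]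
      obtain ⟨g₀, hg₀⟩ := sep hp hW hb
      have claim1 : ∀ u' ∈ P, ∃ μ : ZMod p, u' = u ^ μ.val := by
        intro u' hu'
        have hx1 : ∃ k : ℤ, u.1 ^ k = u'.1 := by
          by_contra hk
          push_neg at hk
          obtain ⟨f, hfa, hfa'⟩ := sep2 hp hU hk
          have hfx : (f v.1).toAdd = 0 := by
            apply scalW _ _ hb
            intro g
            have ho := orth u hu v hv f g
            rw [hfa] at ho
            linear_combination -ho
          apply hv2
          apply annW
          intro g
          have ho := orth u' hu' v hv f g
          rw [hfa', hfx, one_mul, zero_mul] at ho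
          exact ho
        obtain ⟨k, hk⟩ := hx1
        refine ⟨(k : ZMod p), ?_⟩
        have hx' : u'.1 = u.1 ^ ((k : ZMod p).val) := by
          rw [← hk]
          exact zpow_congr hp (hU u.1) k
        have hy' : u'.2 = u.2 ^ ((k : ZMod p).val) := by
          apply elemW
          intro g
          have ho := orth u' hu' v hv f₀ g
          rw [hx', FpowU f₀ u.1 _, hf₀, mul_one, step1, FpowW g u.2 α, ← hαdef] at ho
          rw [FpowW g u.2]
          have ho2 : α * ((k : ZMod p) * (g u.2).toAdd) = α * ((g u'.2).toAdd) := by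
            linear_combination ho
          exact (mul_left_cancel₀ hα ho2).symm
        exact Prod.ext_iff.mpr ⟨hx', hy'⟩
      have claim2 : ∀ v' ∈ Q, ∃ ν : ZMod p, v' = u ^ ν.val := by
        intro v' hv'
        have hy1 : ∃ k : ℤ, u.2 ^ k = v'.2 := by
          by_contra hk
          push_neg at hk
          obtain ⟨g, hgb, hgy'⟩ := sep2 hp hW hk
          apply hu1
          apply annU
          intro f
          have ho := orth u hu v' hv' f g
          rw [hgy', hgb, mul_one, mul_zero] at ho
          exact ho
        obtain ⟨k, hk⟩ := hy1
        refine ⟨(k : ZMod p), ?_⟩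
        have hy' : v'.2 = u.2 ^ ((k : ZMod p).val) := by
          rw [← hk]
          exact zpow_congr hp (hW u.2) k
        have hx'' : v'.1 = u.1 ^ ((k : ZMod p).val) := by
          apply elemU
          intro f
          have ho := orth u hu v' hv' f g₀
          rw [hy', FpowW g₀ u.2 _, hg₀, mul_one] at ho
          rw [FpowU f u.1]
          linear_combination -ho
        exact Prod.ext_iff.mpr ⟨hx'', hy'⟩
      have hPz : P ≤ Subgroup.zpowers u := by
        intro u' hu'
        obtain ⟨μ, h⟩ := claim1 u' hu'
        exact Subgroup.mem_zpowers_iff.mpr ⟨(μ.val : ℤ), by rw [zpow_natCast, ← h]⟩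
      have hQz : Q ≤ Subgroup.zpowers u := by
        intro v' hv'
        obtain ⟨ν, h⟩ := claim2 v' hv'
        exact Subgroup.mem_zpowers_iff.mpr ⟨(ν.val : ℤ), by rw [zpow_natCast, ← h]⟩
      have htop : (⊤ : Subgroup (U × W)) ≤ Subgroup.zpowers u := by
        rw [← hPQ]
        exact sup_le hPz hQz
      obtain ⟨k, hk⟩ := Subgroup.mem_zpowers_iff.mp (htop (Subgroup.mem_top (u.1, 1)))
      have h2 : u.2 ^ k = 1 := congrArg Prod.snd hk
      have h1 : u.1 ^ k = u.1 := congrArg Prod.fst hk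
      have hc0 : ((k : ZMod p)) = 0 := by
        apply pow_val_eq_one_iff hp (hW u.2) hb
        rw [← zpow_congr hp (hW u.2) k]
        exact h2
      apply hu1
      rw [zpow_congr hp (hU u.1) k, hc0, ZMod.val_zero, pow_zero] at h1
      exact h1.symm
    · -- Case C : all of Q has trivial second component
      push_neg at hQy
      obtain ⟨uP, huP, hu1⟩ := hPa
      have hQne : ∃ v ∈ Q, v ≠ 1 := by
        by_contra h
        push_neg at h
        exact hQ ((Subgroup.eq_bot_iff_forall Q).mpr h)
      obtain ⟨vQ, hvQ, hvQne⟩ := hQne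
      have hvQ1 : vQ.1 ≠ 1 := by
        intro h1
        exact hvQne (Prod.ext_iff.mpr ⟨h1, hQy vQ hvQ⟩)
      obtain ⟨w₀, hw₀⟩ := exists_ne (1 : W)
      have hmem : ((1 : U), w₀) ∈ ((P : Set (U × W)) * (Q : Set (U × W))) := by
        rw [← Subgroup.mul_normal, hPQ]
        trivial
      obtain ⟨w1, hw1, w2, hw2, hw⟩ := Set.mem_mul.mp hmem
      have hw12 : w1.2 = w₀ := by
        have := congrArg Prod.snd hw
        simp only [Prod.snd_mul] at this
        rwa [hQy w2 hw2, mul_one] at this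
      have hw12ne : w1.2 ≠ 1 := by rw [hw12]; exact hw₀
      obtain ⟨f, hf⟩ := sep hp hU hvQ1
      obtain ⟨g, hg⟩ := sep hp hW hw12ne
      have ho := orth w1 hw1 vQ hvQ f g
      rw [hQy vQ hvQ, map_one, hf, hg, mul_one] at ho
      simp only [toAdd_one, mul_zero] at ho
      exact one_ne_zero ho.symm
  · -- Case B : all of P has trivial first component
    push_neg at hPa
    have hPne : ∃ u ∈ P, u ≠ 1 := by
      by_contra h
      push_neg at h
      exact hP ((Subgroup.eq_bot_iff_forall P).mpr h)
    obtain ⟨uP, huP, huPne⟩ := hPne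
    have hb : uP.2 ≠ 1 := by
      intro h2
      exact huPne (Prod.ext_iff.mpr ⟨hPa uP huP, h2⟩)
    obtain ⟨a₀, ha₀⟩ := exists_ne (1 : U)
    have hmem : ((a₀, (1 : W))) ∈ ((P : Set (U × W)) * (Q : Set (U × W))) := by
      rw [← Subgroup.mul_normal, hPQ]
      trivial
    obtain ⟨w1, hw1, w2, hw2, hw⟩ := Set.mem_mul.mp hmem
    have hw21 : w2.1 = a₀ := by
      have := congrArg Prod.fst hw
      simp only [Prod.fst_mul] at this
      rwa [hPa w1 hw1, one_mul] at this
    have hw21ne : w2.1 ≠ 1 := by rw [hw21]; exact ha₀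
    obtain ⟨f, hf⟩ := sep hp hU hw21ne
    apply hb
    apply annW
    intro g
    have ho := orth uP huP w2 hw2 f g
    rw [hPa uP huP, map_one, hf, one_mul] at ho
    simp only [toAdd_one, zero_mul] at ho
    linear_combination -ho

open Subgroup

variable {A B : Type} [Group A] [Group B] {H : Subgroup A} {K : Subgroup B} {φ : H ≃* K}

lemma commutator_le_center {X : Type} [Group X] (hX : ∀ x y z : X, ⁅⁅x, y⁆, z⁆ = 1) :
    commutator X ≤ Subgroup.center X := by
  rw [_root_.commutator_def, Subgroup.commutator_le]
  intro g₁ _ g₂ _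
  rw [Subgroup.mem_center_iff]
  intro z
  exact (commutatorElement_eq_one_iff_commute.mp (hX g₁ g₂ z)).symm.eq

/-- The universal property of the amalgam for class-two targets. -/
lemma exists_lift {X : Type} [Group X] (fA : A →* X) (fB : B →* X)
    (hX : ∀ x y z : X, ⁅⁅x, y⁆, z⁆ = 1) (hrel : ∀ h : H, fA h = fB (φ h)) :
    ∃ Ψ : amalgam A B H K φ →* X,
      (∀ a, Ψ (amalgam.inl A B H K φ a) = fA a) ∧
      (∀ b, Ψ (amalgam.inr A B H K φ b) = fB b) := by
  have hcen := commutator_le_center hX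
  set Ψ₀ := Monoid.Coprod.lift fA fB with hΨ₀
  have h1 : (⊤ : Subgroup (Monoid.Coprod A B)).lowerCentralSeries 2 ≤ Ψ₀.ker := by
    show ⁅⁅(⊤ : Subgroup (Monoid.Coprod A B)), ⊤⁆, ⊤⁆ ≤ Ψ₀.ker
    rw [Subgroup.commutator_le]
    intro g₁ hg₁ g₂ _
    rw [MonoidHom.mem_ker, map_commutatorElement]
    have hmem : Ψ₀ g₁ ∈ commutator X := by
      have h2 : Ψ₀ g₁ ∈ Subgroup.map Ψ₀ ⁅(⊤ : Subgroup (Monoid.Coprod A B)), ⊤⁆ :=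
        Subgroup.mem_map_of_mem _ hg₁
      rw [Subgroup.map_commutator] at h2
      exact Subgroup.commutator_mono le_top le_top h2
    exact commutatorElement_eq_one_iff_commute.mpr
      ((Subgroup.mem_center_iff.mp (hcen hmem) (Ψ₀ g₂)).symm)
  set Ψ₁ : nilProd2 A B →* X := QuotientGroup.lift _ Ψ₀ h1 with hΨ₁
  have h2 : amalgamRel A B H K φ ≤ Ψ₁.ker := by
    apply Subgroup.normalClosure_le_normal
    rintro x ⟨h, rfl⟩
    rw [SetLike.mem_coe, MonoidHom.mem_ker]
    show Ψ₁ (nilProd2.inl A B h * (nilProd2.inr A B (φ h))⁻¹) = 1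
    rw [map_mul, map_inv]
    have e1 : Ψ₁ (nilProd2.inl A B h) = fA h := by
      show Ψ₁ (QuotientGroup.mk' _ (Monoid.Coprod.inl (h : A))) = fA h
      rw [hΨ₁]
      rw [QuotientGroup.mk'_apply, QuotientGroup.lift_mk']
      exact Monoid.Coprod.lift_apply_inl fA fB h
    have e2 : Ψ₁ (nilProd2.inr A B (φ h)) = fB (φ h) := by
      show Ψ₁ (QuotientGroup.mk' _ (Monoid.Coprod.inr ((φ h : B)))) = fB (φ h)
      rw [hΨ₁, QuotientGroup.mk'_apply, QuotientGroup.lift_mk']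
      exact Monoid.Coprod.lift_apply_inr fA fB (φ h)
    rw [e1, e2, hrel h, mul_inv_cancel]
  refine ⟨QuotientGroup.lift _ Ψ₁ h2, fun a => ?_, fun b => ?_⟩
  · show QuotientGroup.lift _ Ψ₁ h2 (QuotientGroup.mk' _ (QuotientGroup.mk' _ (Monoid.Coprod.inl a))) = fA a
    rw [QuotientGroup.mk'_apply, QuotientGroup.lift_mk', hΨ₁, QuotientGroup.mk'_apply, QuotientGroup.lift_mk']
    exact Monoid.Coprod.lift_apply_inl fA fB a
  · show QuotientGroup.lift _ Ψ₁ h2 (QuotientGroup.mk' _ (QuotientGroup.mk' _ (Monoid.Coprod.inr b))) = fB b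
    rw [QuotientGroup.mk'_apply, QuotientGroup.lift_mk', hΨ₁, QuotientGroup.mk'_apply, QuotientGroup.lift_mk']
    exact Monoid.Coprod.lift_apply_inr fA fB b

/-- Homomorphisms from the amalgam are determined by their restrictions. -/
lemma amalgam_hom_ext {X : Type} [Group X] {ψ₁ ψ₂ : amalgam A B H K φ →* X}
    (h1 : ∀ a, ψ₁ (amalgam.inl A B H K φ a) = ψ₂ (amalgam.inl A B H K φ a))
    (h2 : ∀ b, ψ₁ (amalgam.inr A B H K φ b) = ψ₂ (amalgam.inr A B H K φ b)) :
    ψ₁ = ψ₂ := by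
  apply QuotientGroup.monoidHom_ext
  apply QuotientGroup.monoidHom_ext
  apply Monoid.Coprod.hom_ext
  · ext a
    exact h1 a
  · ext b
    exact h2 b

/-- Every element of the amalgam lifts to the free product. -/
lemma amalgam_mk_surjective :
    ∀ g : amalgam A B H K φ, ∃ q : Monoid.Coprod A B,
      QuotientGroup.mk' (amalgamRel A B H K φ) (QuotientGroup.mk'
        ((⊤ : Subgroup (Monoid.Coprod A B)).lowerCentralSeries 2) q) = g := by
  intro g
  refine QuotientGroup.induction_on g (fun g1 => ?_)
  refine QuotientGroup.induction_on g1 (fun q => ?_)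
  exact ⟨q, rfl⟩

/-- The amalgam has class at most two. -/
lemma amalgam_triple (g1 g2 g3 : amalgam A B H K φ) : ⁅⁅g1, g2⁆, g3⁆ = 1 := by
  obtain ⟨q1, rfl⟩ := amalgam_mk_surjective g1
  obtain ⟨q2, rfl⟩ := amalgam_mk_surjective g2
  obtain ⟨q3, rfl⟩ := amalgam_mk_surjective g3
  set ψ : Monoid.Coprod A B →* amalgam A B H K φ :=
    (QuotientGroup.mk' (amalgamRel A B H K φ)).comp
      (QuotientGroup.mk' ((⊤ : Subgroup (Monoid.Coprod A B)).lowerCentralSeries 2)) with hψ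
  have h1 : ∀ q, QuotientGroup.mk' (amalgamRel A B H K φ) (QuotientGroup.mk'
      ((⊤ : Subgroup (Monoid.Coprod A B)).lowerCentralSeries 2) q) = ψ q := fun _ => rfl
  rw [h1, h1, h1, ← map_commutatorElement, ← map_commutatorElement]
  have hmem : ⁅⁅q1, q2⁆, q3⁆ ∈ (⊤ : Subgroup (Monoid.Coprod A B)).lowerCentralSeries 2 := by
    show _ ∈ ⁅⁅(⊤ : Subgroup (Monoid.Coprod A B)), ⊤⁆, ⊤⁆
    exact Subgroup.commutator_mem_commutator
      (Subgroup.commutator_mem_commutator (Subgroup.mem_top q1) (Subgroup.mem_top q2))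
      (Subgroup.mem_top q3)
  rw [hψ]
  rw [MonoidHom.comp_apply]
  have : QuotientGroup.mk' ((⊤ : Subgroup (Monoid.Coprod A B)).lowerCentralSeries 2) ⁅⁅q1, q2⁆, q3⁆ = 1 :=
    (QuotientGroup.eq_one_iff _).mpr hmem
  rw [this, map_one]

lemma mem_center_sup {G' : Type} [Group G'] (Dq : Subgroup G') (x : G')
    (hx : Subgroup.center G' ⊔ Dq = ⊤) :
    ∃ z ∈ Subgroup.center G', ∃ d ∈ Dq, z * d = x := by
  have hmem : x ∈ ((Subgroup.center G' : Set G') * (Dq : Set G')) := by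
    rw [← Subgroup.normal_mul, hx]
    trivial
  exact Set.mem_mul.mp hmem

end Stmt10

/-- the amalgamated coproduct of nontrivial groups of class at
most 2 and odd prime exponent `p` admits no nontrivial central product
decomposition. -/
theorem stmt_10 (p : ℕ) (hp : p.Prime) (hodd : Odd p)
    (A B : Type) [Group A] [Group B] [Nontrivial A] [Nontrivial B]
    (hA : (⊤ : Subgroup A).lowerCentralSeries 2 = ⊥) (hB : (⊤ : Subgroup B).lowerCentralSeries 2 = ⊥)
    (hAe : ∀ a : A, a ^ p = 1) (hBe : ∀ b : B, b ^ p = 1)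
    (H : Subgroup A) (K : Subgroup B)
    (hH : H ≤ commutator A) (hK : K ≤ commutator B) (φ : H ≃* K) :
    ∀ C D : Subgroup (amalgam A B H K φ),
      C ⊔ D = ⊤ → ⁅C, D⁆ = ⊥ → C ≤ D ∨ D ≤ C := by

  intro C D hCD hcomm
  haveI := Fact.mk hp
  haveI : NeZero p := ⟨hp.ne_zero⟩
  classical
  -- Basic structure of G
  have h3G : ∀ x y z : amalgam A B H K φ, ⁅⁅x, y⁆, z⁆ = 1 := Stmt10.amalgam_triple
  have hGcen : commutator (amalgam A B H K φ) ≤ Subgroup.center (amalgam A B H K φ) :=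
    Stmt10.commutator_le_center h3G
  have habA : ∀ a : A, a ∈ commutator A → (Abelianization.of a : Abelianization A) = 1 :=
    fun a ha => (QuotientGroup.eq_one_iff a).mpr ha
  have habB : ∀ b : B, b ∈ commutator B → (Abelianization.of b : Abelianization B) = 1 :=
    fun b hb => (QuotientGroup.eq_one_iff b).mpr hb
  have habelian3 : ∀ (X : Type) [CommGroup X], ∀ x y z : X, ⁅⁅x, y⁆, z⁆ = 1 := by
    intro X _ x y z
    rw [commutatorElement_eq_one_iff_commute.mpr (Commute.all x y)]
    exact commutatorElement_eq_one_iff_commute.mpr (Commute.all 1 z)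
  -- The abelianization map π
  obtain ⟨π, hπl, hπr⟩ := Stmt10.exists_lift
    (X := Abelianization A × Abelianization B)
    ((Abelianization.of).prod 1) (MonoidHom.prod 1 Abelianization.of)
    (habelian3 _) (fun h0 => by
      have e1 : (Abelianization.of (h0 : A) : Abelianization A) = 1 := habA _ (hH h0.2)
      have e2 : (Abelianization.of ((φ h0 : B)) : Abelianization B) = 1 := habB _ (hK (φ h0).2)
      show ((Abelianization.of (h0 : A) : Abelianization A), (1 : Abelianization B))
        = ((1 : Abelianization A), Abelianization.of ((φ h0 : B)))
      rw [e1, e2])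
  have hπl' : ∀ a : A, π (amalgam.inl A B H K φ a) = (Abelianization.of a, 1) := fun a => hπl a
  have hπr' : ∀ b : B, π (amalgam.inr A B H K φ b) = (1, Abelianization.of b) := fun b => hπr b
  -- π is surjective
  have πsurj : Function.Surjective π := by
    intro uv
    obtain ⟨a, ha⟩ : ∃ a, Abelianization.of a = uv.1 := Quotient.inductionOn' uv.1 (fun a => ⟨a, rfl⟩)
    obtain ⟨b, hb⟩ : ∃ b, Abelianization.of b = uv.2 := Quotient.inductionOn' uv.2 (fun b => ⟨b, rfl⟩)
    refine ⟨amalgam.inl A B H K φ a * amalgam.inr A B H K φ b, ?_⟩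
    rw [map_mul, hπl', hπr']
    rw [Prod.mk_mul_mk, mul_one, one_mul, ha, hb]
  -- the retraction
  have hs : ∀ gg : amalgam A B H K φ,
      ((Abelianization.lift ((Abelianization.of).comp (amalgam.inl A B H K φ))).coprod
        (Abelianization.lift ((Abelianization.of).comp (amalgam.inr A B H K φ)))) (π gg)
      = Abelianization.of gg := by
    set sA := Abelianization.lift ((Abelianization.of).comp (amalgam.inl A B H K φ))
    set sB := Abelianization.lift ((Abelianization.of).comp (amalgam.inr A B H K φ))
    have hhom : (sA.coprod sB).comp π = Abelianization.of := by
      apply Stmt10.amalgam_hom_ext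
      · intro a
        rw [MonoidHom.comp_apply, hπl']
        rw [MonoidHom.coprod_apply]
        show sA (Abelianization.of a) * sB 1 = _
        rw [map_one, mul_one]
        exact Abelianization.lift_apply_of _ a
      · intro b
        rw [MonoidHom.comp_apply, hπr']
        rw [MonoidHom.coprod_apply]
        show sA 1 * sB (Abelianization.of b) = _
        rw [map_one, one_mul]
        exact Abelianization.lift_apply_of _ b
    intro gg
    exact DFunLike.congr_fun hhom gg
  -- commutator manipulation helpers
  have hc1 : ∀ z ∈ Subgroup.center (amalgam A B H K φ), ∀ d w : amalgam A B H K φ,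
      ⁅z * d, w⁆ = ⁅d, w⁆ := by
    intro z hz d w
    have hz' := Subgroup.mem_center_iff.mp hz
    have h1 : z * (d * w * d⁻¹) = (d * w * d⁻¹) * z := (hz' _).symm
    calc ⁅z * d, w⁆ = z * d * w * (d⁻¹ * z⁻¹) * w⁻¹ := by
          rw [commutatorElement_def, mul_inv_rev]
      _ = (z * (d * w * d⁻¹)) * z⁻¹ * w⁻¹ := by group
      _ = ((d * w * d⁻¹) * z) * z⁻¹ * w⁻¹ := by rw [h1]
      _ = d * w * d⁻¹ * w⁻¹ := by group
      _ = ⁅d, w⁆ := (commutatorElement_def d w).symm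
  have hc2 : ∀ z ∈ Subgroup.center (amalgam A B H K φ), ∀ d w : amalgam A B H K φ,
      ⁅d, z * w⁆ = ⁅d, w⁆ := by
    intro z hz d w
    have hz' := Subgroup.mem_center_iff.mp hz
    have h2 : z * (d * w * d⁻¹ * w⁻¹) = (d * w * d⁻¹ * w⁻¹) * z := (hz' _).symm
    calc ⁅d, z * w⁆ = d * (z * w) * d⁻¹ * (w⁻¹ * z⁻¹) := by
          rw [commutatorElement_def, mul_inv_rev]
      _ = (d * z) * (w * d⁻¹ * w⁻¹) * z⁻¹ := by group
      _ = (z * d) * (w * d⁻¹ * w⁻¹) * z⁻¹ := by rw [hz' d]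
      _ = (z * (d * w * d⁻¹ * w⁻¹)) * z⁻¹ := by group
      _ = ((d * w * d⁻¹ * w⁻¹) * z) * z⁻¹ := by rw [h2]
      _ = d * w * d⁻¹ * w⁻¹ := by group
      _ = ⁅d, w⁆ := (commutatorElement_def d w).symm
  -- the main reduction: if the image of C' under π is trivial, then C' ≤ D'
  have main : ∀ C' D' : Subgroup (amalgam A B H K φ), C' ⊔ D' = ⊤ →
      Subgroup.map π C' = ⊥ → C' ≤ D' := by
    intro C' D' hsup hbot
    have hCcomm : ∀ c ∈ C', c ∈ commutator (amalgam A B H K φ) := by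
      intro c hc
      have h1 : π c = 1 := by
        have hmem : π c ∈ Subgroup.map π C' := Subgroup.mem_map_of_mem π hc
        rw [hbot] at hmem
        exact Subgroup.mem_bot.mp hmem
      have h2 : Abelianization.of c = 1 := by rw [← hs c, h1, map_one]
      exact (QuotientGroup.eq_one_iff c).mp h2
    have hZD : Subgroup.center (amalgam A B H K φ) ⊔ D' = ⊤ := by
      rw [eq_top_iff, ← hsup]
      exact sup_le_sup_right (fun c hc => hGcen (hCcomm c hc)) D'
    have hcommD : commutator (amalgam A B H K φ) ≤ D' := by
      rw [commutator_def, Subgroup.commutator_le]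
      intro g₁ _ g₂ _
      obtain ⟨z₁, hz₁, d₁, hd₁, hg1eq⟩ := Stmt10.mem_center_sup D' g₁ hZD
      obtain ⟨z₂, hz₂, d₂, hd₂, hg2eq⟩ := Stmt10.mem_center_sup D' g₂ hZD
      have he : ⁅g₁, g₂⁆ = ⁅d₁, d₂⁆ := by
        rw [← hg1eq, ← hg2eq, hc1 z₁ hz₁, hc2 z₂ hz₂]
      rw [he, commutatorElement_def]
      exact Subgroup.mul_mem _ (Subgroup.mul_mem _ (Subgroup.mul_mem _ hd₁ hd₂)
        (Subgroup.inv_mem _ hd₁)) (Subgroup.inv_mem _ hd₂)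
    exact fun c hc => hcommD (hCcomm c hc)
  -- nontriviality of the abelianizations
  have hAab : Nontrivial (Abelianization A) := by
    have hcomTop : commutator A ≠ ⊤ := by
      intro htop
      have h2 : (⊤ : Subgroup A).lowerCentralSeries 2 = commutator A := by
        show ⁅(⊤ : Subgroup A).lowerCentralSeries 1, ⊤⁆ = commutator A
        rw [lowerCentralSeries_one, htop, ← commutator_def]
        exact htop
      have hcb : commutator A = ⊥ := by rw [← h2, hA]
      have hbt : (⊤ : Subgroup A) = ⊥ := by rw [← htop, hcb]
      obtain ⟨a, ha⟩ := exists_ne (1 : A)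
      exact ha (Subgroup.mem_bot.mp (hbt ▸ Subgroup.mem_top a))
    obtain ⟨a, ha⟩ : ∃ a : A, a ∉ commutator A := by
      by_contra hall
      push_neg at hall
      exact hcomTop (by rw [eq_top_iff]; exact fun x _ => hall x)
    exact ⟨⟨Abelianization.of a, 1, fun h => ha ((QuotientGroup.eq_one_iff a).mp h)⟩⟩
  have hBab : Nontrivial (Abelianization B) := by
    have hcomTop : commutator B ≠ ⊤ := by
      intro htop
      have h2 : (⊤ : Subgroup B).lowerCentralSeries 2 = commutator B := by
        show ⁅(⊤ : Subgroup B).lowerCentralSeries 1, ⊤⁆ = commutator B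
        rw [lowerCentralSeries_one, htop, ← commutator_def]
        exact htop
      have hcb : commutator B = ⊥ := by rw [← h2, hB]
      have hbt : (⊤ : Subgroup B) = ⊥ := by rw [← htop, hcb]
      obtain ⟨b, hb⟩ := exists_ne (1 : B)
      exact hb (Subgroup.mem_bot.mp (hbt ▸ Subgroup.mem_top b))
    obtain ⟨b, hb⟩ : ∃ b : B, b ∉ commutator B := by
      by_contra hall
      push_neg at hall
      exact hcomTop (by rw [eq_top_iff]; exact fun x _ => hall x)
    exact ⟨⟨Abelianization.of b, 1, fun h => hb ((QuotientGroup.eq_one_iff b).mp h)⟩⟩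
  have hAexp : ∀ u : Abelianization A, u ^ p = 1 := fun u =>
    Quotient.inductionOn' u (fun a => by
      rw [show (Quotient.mk'' a : Abelianization A) = Abelianization.of a from rfl,
        ← map_pow, hAe, map_one])
  have hBexp : ∀ u : Abelianization B, u ^ p = 1 := fun u =>
    Quotient.inductionOn' u (fun b => by
      rw [show (Quotient.mk'' b : Abelianization B) = Abelianization.of b from rfl,
        ← map_pow, hBe, map_one])
  -- commuting elements are "orthogonal" via Heisenberg representations
  have heisorth : ∀ c ∈ C, ∀ d ∈ D,
      ∀ (f : Abelianization A →* Multiplicative (ZMod p))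
        (g : Abelianization B →* Multiplicative (ZMod p)),
      (f (π c).1).toAdd * (g (π d).2).toAdd = (f (π d).1).toAdd * (g (π c).2).toAdd := by
    intro c hc d hd f g
    obtain ⟨Φ, hΦl, hΦr⟩ := Stmt10.exists_lift
      (X := Stmt10.Heis (ZMod p))
      (Stmt10.Heis.mkX.comp (f.comp Abelianization.of))
      (Stmt10.Heis.mkY.comp (g.comp Abelianization.of))
      (fun x y z => Stmt10.Heis.triple_commutator x y z)
      (fun h0 => by
        have e1 : (Abelianization.of (h0 : A) : Abelianization A) = 1 := habA _ (hH h0.2)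
        have e2 : (Abelianization.of ((φ h0 : B)) : Abelianization B) = 1 := habB _ (hK (φ h0).2)
        show Stmt10.Heis.mkX (f (Abelianization.of (h0 : A)))
          = Stmt10.Heis.mkY (g (Abelianization.of ((φ h0 : B))))
        rw [e1, e2, map_one, map_one, map_one, map_one])
    have hΦl' : ∀ a : A, Φ (amalgam.inl A B H K φ a)
        = Stmt10.Heis.mkX (f (Abelianization.of a)) := fun a => hΦl a
    have hΦr' : ∀ b : B, Φ (amalgam.inr A B H K φ b)
        = Stmt10.Heis.mkY (g (Abelianization.of b)) := fun b => hΦr b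
    have hx : ∀ gg : amalgam A B H K φ, (Φ gg).x = (f (π gg).1).toAdd := by
      have hhom : (Stmt10.Heis.xHom.comp Φ) = (f.comp ((MonoidHom.fst _ _).comp π)) := by
        apply Stmt10.amalgam_hom_ext
        · intro a
          show Stmt10.Heis.xHom (Φ (amalgam.inl A B H K φ a)) = f (π (amalgam.inl A B H K φ a)).1
          rw [hΦl' a, hπl']
          show Multiplicative.ofAdd ((f (Abelianization.of a)).toAdd) = f (Abelianization.of a)
          exact ofAdd_toAdd _
        · intro b
          show Stmt10.Heis.xHom (Φ (amalgam.inr A B H K φ b)) = f (π (amalgam.inr A B H K φ b)).1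
          rw [hΦr' b, hπr']
          show Multiplicative.ofAdd ((0 : ZMod p)) = f (1 : Abelianization A)
          rw [map_one]
          rfl
      intro gg
      have h1 := DFunLike.congr_fun hhom gg
      have h2 := congrArg Multiplicative.toAdd h1
      simpa using h2
    have hy : ∀ gg : amalgam A B H K φ, (Φ gg).y = (g (π gg).2).toAdd := by
      have hhom : (Stmt10.Heis.yHom.comp Φ) = (g.comp ((MonoidHom.snd _ _).comp π)) := by
        apply Stmt10.amalgam_hom_ext
        · intro a
          show Stmt10.Heis.yHom (Φ (amalgam.inl A B H K φ a)) = g (π (amalgam.inl A B H K φ a)).2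
          rw [hΦl' a, hπl']
          show Multiplicative.ofAdd ((0 : ZMod p)) = g (1 : Abelianization B)
          rw [map_one]
          rfl
        · intro b
          show Stmt10.Heis.yHom (Φ (amalgam.inr A B H K φ b)) = g (π (amalgam.inr A B H K φ b)).2
          rw [hΦr' b, hπr']
          show Multiplicative.ofAdd ((g (Abelianization.of b)).toAdd) = g (Abelianization.of b)
          exact ofAdd_toAdd _
      intro gg
      have h1 := DFunLike.congr_fun hhom gg
      have h2 := congrArg Multiplicative.toAdd h1
      simpa using h2
    have hcd : ⁅c, d⁆ = 1 := by
      have := (Subgroup.commutator_le.mp (le_of_eq hcomm)) c hc d hd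
      exact Subgroup.mem_bot.mp this
    have hΦcd : ⁅Φ c, Φ d⁆ = 1 := by
      rw [← map_commutatorElement, hcd, map_one]
    rw [Stmt10.Heis.commutator_eq] at hΦcd
    have hz := congrArg Stmt10.Heis.z hΦcd
    simp only [Stmt10.Heis.one_z'] at hz
    have hz' : (Φ c).x * (Φ d).y - (Φ d).x * (Φ c).y = 0 := hz
    rw [hx c, hx d, hy c, hy d] at hz'
    linear_combination hz'
  -- apply the core lemma to the images of C and D
  have hmapsup : Subgroup.map π C ⊔ Subgroup.map π D = ⊤ := by
    rw [← Subgroup.map_sup, hCD, ← MonoidHom.range_eq_map]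
    exact MonoidHom.range_eq_top.mpr πsurj
  have horth : ∀ u ∈ Subgroup.map π C, ∀ v ∈ Subgroup.map π D,
      ∀ (f : Abelianization A →* Multiplicative (ZMod p))
        (g : Abelianization B →* Multiplicative (ZMod p)),
      (f u.1).toAdd * (g v.2).toAdd = (f v.1).toAdd * (g u.2).toAdd := by
    rintro u ⟨c, hc, rfl⟩ v ⟨d, hd, rfl⟩ f g
    exact heisorth c hc d hd f g
  rcases Stmt10.core hp hAexp hBexp (Subgroup.map π C) (Subgroup.map π D) hmapsup horth with h | h
  · exact Or.inl (main C D hCD h)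
  · exact Or.inr (main D C (by rw [sup_comm]; exact hCD) h)
end

section
/- Let G be a nontrivial group of class at most 2 and odd prime exponent p such that Z(G) = [G,G], and suppose G = CD is a nontrivial central product decomposition with [C,C] ∩ [D,D] nontrivial. Then G is not capable. -/
open scoped commutatorElement

private lemma hn_central_mul_left {E : Type*} [Group E] (u a c : E)
    (hu : u ∈ Subgroup.center E) : ⁅u * a, c⁆ = ⁅a, c⁆ := by
  have hu' := Subgroup.mem_center_iff.mp ((Subgroup.center E).inv_mem hu)
  have h : a * c * a⁻¹ * u⁻¹ = u⁻¹ * (a * c * a⁻¹) := hu' _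
  calc ⁅u * a, c⁆ = u * (a * c * a⁻¹ * u⁻¹) * c⁻¹ := by
        rw [commutatorElement_def]; group
    _ = u * (u⁻¹ * (a * c * a⁻¹)) * c⁻¹ := by rw [h]
    _ = ⁅a, c⁆ := by rw [commutatorElement_def]; group

private lemma hn_central_mul_right {E : Type*} [Group E] (v a b : E)
    (hv : v ∈ Subgroup.center E) : ⁅a, v * b⁆ = ⁅a, b⁆ := by
  rw [← commutatorElement_inv (v * b) a, hn_central_mul_left v b a hv,
    commutatorElement_inv]

private lemma hn_conj_aux {E : Type*} [Group E] (x a : E)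
    (h : ⁅a, x⁆ ∈ Subgroup.center E) : x⁻¹ * a * x = ⁅a, x⁆ * a := by
  have hc := Subgroup.mem_center_iff.mp h x
  calc x⁻¹ * a * x = x⁻¹ * (⁅a, x⁆ * x) * a := by
        rw [commutatorElement_def]; group
    _ = x⁻¹ * (x * ⁅a, x⁆) * a := by rw [hc]
    _ = ⁅a, x⁆ * a := by group

private lemma hn_commute_commutator {E : Type*} [Group E] (x a b : E)
    (ha : ⁅a, x⁆ ∈ Subgroup.center E) (hb : ⁅b, x⁆ ∈ Subgroup.center E) :
    Commute ⁅a, b⁆ x := by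
  have h3 : x⁻¹ * ⁅a, b⁆ * x = ⁅x⁻¹ * a * x, x⁻¹ * b * x⁆ := by
    rw [commutatorElement_def, commutatorElement_def]; group
  rw [hn_conj_aux x a ha, hn_conj_aux x b hb, hn_central_mul_left _ _ _ ha,
    hn_central_mul_right _ _ _ hb] at h3
  show ⁅a, b⁆ * x = x * ⁅a, b⁆
  calc ⁅a, b⁆ * x = x * (x⁻¹ * ⁅a, b⁆ * x) := by group
    _ = x * ⁅a, b⁆ := by rw [h3]

private lemma hn_preimage_commute {E G : Type*} [Group E] [Group G] (ψ : E →* G)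
    (hsurj : Function.Surjective ψ) (hker : ψ.ker ≤ Subgroup.center E)
    (A B : Subgroup G) (hAB : ⁅B, A⁆ = ⊥) {z : G} (hz : z ∈ ⁅B, B⁆)
    {e x : E} (he : ψ e = z) (hx : ψ x ∈ A) : Commute e x := by
  have hcent : ∀ b : E, ψ b ∈ B → ⁅b, x⁆ ∈ Subgroup.center E := by
    intro b hb
    apply hker
    rw [MonoidHom.mem_ker, map_commutatorElement]
    have h := Subgroup.commutator_mem_commutator hb hx
    rw [hAB, Subgroup.mem_bot] at h
    exact h
  have hle : ⁅B, B⁆ ≤ Subgroup.map ψ (Subgroup.centralizer {x}) := by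
    rw [Subgroup.commutator_le]
    intro p hp q hq
    obtain ⟨p', hp'⟩ := hsurj p
    obtain ⟨q', hq'⟩ := hsurj q
    have hmem : ⁅p', q'⁆ ∈ Subgroup.centralizer {x} := by
      rw [Subgroup.mem_centralizer_iff]
      rintro h rfl
      exact (hn_commute_commutator h p' q' (hcent p' (hp' ▸ hp))
        (hcent q' (hq' ▸ hq))).symm
    have hval : ⁅p, q⁆ = ψ ⁅p', q'⁆ := by rw [map_commutatorElement, hp', hq']
    rw [hval]
    exact Subgroup.mem_map_of_mem ψ hmem
  obtain ⟨e₀, he₀, he₀z⟩ := hle hz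
  have hk : e₀⁻¹ * e ∈ ψ.ker := by
    rw [MonoidHom.mem_ker, map_mul, map_inv, he₀z, he, inv_mul_cancel]
  have hrw : e = e₀ * (e₀⁻¹ * e) := by group
  rw [hrw]
  have c1 : Commute e₀ x :=
    (Subgroup.mem_centralizer_iff.mp he₀ x rfl).symm
  have c2 : Commute (e₀⁻¹ * e) x :=
    (Subgroup.mem_center_iff.mp (hker hk) x).symm
  exact c1.mul_left c2

/-- Heineken–Nikolova: a group of class at most 2 and odd prime
exponent `p` with `Z(G) = [G,G]` that has a nontrivial central product
decomposition `G = CD` with `[C,C] ∩ [D,D]` nontrivial is not capable. -/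
theorem stmt_11 (p : ℕ) (hp : p.Prime) (hodd : Odd p)
    (G : Type) [Group G] [Nontrivial G]
    (hG2 : (⊤ : Subgroup G).lowerCentralSeries 2 = ⊥) (hGp : ∀ g : G, g ^ p = 1)
    (hZ : Subgroup.center G = commutator G)
    (C D : Subgroup G) (hCD : C ⊔ D = ⊤) (hcomm : ⁅C, D⁆ = ⊥)
    (hC : ¬ C ≤ D) (hD : ¬ D ≤ C) (hint : ⁅C, C⁆ ⊓ ⁅D, D⁆ ≠ ⊥) :
    ¬ IsCapable G := by
  rintro ⟨E, instE, ⟨φ⟩⟩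
  obtain ⟨⟨z, hz⟩, hzne⟩ := Subgroup.ne_bot_iff_exists_ne_one.mp hint
  have hz1 : z ≠ 1 := fun h => hzne (Subtype.ext h)
  set ψ : E →* G := φ.toMonoidHom.comp (QuotientGroup.mk' (Subgroup.center E)) with hψ
  have hsurj : Function.Surjective ψ :=
    φ.surjective.comp (QuotientGroup.mk'_surjective _)
  have hker : ψ.ker ≤ Subgroup.center E := by
    intro a ha
    rw [MonoidHom.mem_ker, hψ, MonoidHom.comp_apply] at ha
    have h1 : QuotientGroup.mk' (Subgroup.center E) a = 1 := by
      apply φ.injective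
      rw [map_one]
      exact ha
    rwa [← QuotientGroup.ker_mk' (Subgroup.center E), MonoidHom.mem_ker]
  obtain ⟨e, he⟩ := hsurj z
  have hcommDC : ⁅D, C⁆ = ⊥ := Subgroup.commutator_comm C D ▸ hcomm
  have h1 : Subgroup.comap ψ C ≤ Subgroup.centralizer {e} := by
    intro x hx
    rw [Subgroup.mem_centralizer_iff]
    rintro h rfl
    exact hn_preimage_commute ψ hsurj hker C D hcommDC hz.2 he hx
  have h2 : Subgroup.comap ψ D ≤ Subgroup.centralizer {e} := by
    intro x hx
    rw [Subgroup.mem_centralizer_iff]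
    rintro h rfl
    exact hn_preimage_commute ψ hsurj hker D C hcomm hz.1 he hx
  have hkC : ψ.ker ≤ Subgroup.comap ψ C := by
    intro a ha
    rw [Subgroup.mem_comap, MonoidHom.mem_ker.mp ha]
    exact one_mem C
  have htop : Subgroup.comap ψ C ⊔ Subgroup.comap ψ D = ⊤ := by
    have hmap : Subgroup.map ψ (Subgroup.comap ψ C ⊔ Subgroup.comap ψ D) = ⊤ := by
      rw [Subgroup.map_sup, Subgroup.map_comap_eq_self_of_surjective hsurj,
        Subgroup.map_comap_eq_self_of_surjective hsurj, hCD]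
    have h3 := Subgroup.comap_map_eq ψ (Subgroup.comap ψ C ⊔ Subgroup.comap ψ D)
    rw [hmap, Subgroup.comap_top,
      sup_eq_left.mpr (le_trans hkC le_sup_left)] at h3
    exact h3.symm
  have hcent : e ∈ Subgroup.center E := by
    have : Subgroup.centralizer {e} = ⊤ :=
      top_le_iff.mp (htop ▸ sup_le h1 h2)
    exact Subgroup.centralizer_eq_top_iff_subset.mp this rfl
  apply hz1
  rw [← he, hψ, MonoidHom.comp_apply]
  have : QuotientGroup.mk' (Subgroup.center E) e = 1 := by
    rw [← MonoidHom.mem_ker, QuotientGroup.ker_mk' (Subgroup.center E)]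
    exact hcent
  rw [this, map_one]
end

section
/- Let G be a nilpotent group of class at most 2 and odd prime exponent p that is a nontrivial direct product G = A × B with A, B nontrivial. Then G is capable if and only if each of A and B is either capable or nontrivial cyclic. -/
open scoped commutatorElement

lemma mem_epicenter {G : Type} [Group G] {z : G} :
    z ∈ epicenter G ↔ ∀ (E : Type) (_ : Group E) (ψ : E →* G), Function.Surjective ψ →
      ψ.ker ≤ Subgroup.center E → z ∈ Subgroup.map ψ (Subgroup.center E) := by
  simp [epicenter, Subgroup.mem_iInf]

lemma epicenter_eq_bot_of_isCapable {G : Type} [Group G] (h : IsCapable G) :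
    epicenter G = ⊥ := by
  obtain ⟨E, _, ⟨e⟩⟩ := h
  rw [eq_bot_iff]
  intro z hz
  have key := (mem_epicenter.mp hz) E _
    (e.toMonoidHom.comp (QuotientGroup.mk' (Subgroup.center E)))
    (e.surjective.comp (QuotientGroup.mk'_surjective _))
    (by
      intro x hx
      have : e ((QuotientGroup.mk' (Subgroup.center E)) x) = 1 := hx
      have h1 : (QuotientGroup.mk' (Subgroup.center E)) x = 1 := by
        apply e.injective; simpa using this
      exact (QuotientGroup.eq_one_iff x).mp h1)
  obtain ⟨w, hw, rfl⟩ := key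
  have : (QuotientGroup.mk' (Subgroup.center E)) w = 1 := (QuotientGroup.eq_one_iff w).mpr hw
  simp only [MonoidHom.comp_apply, this, map_one]
  exact Subgroup.mem_bot.mpr rfl

/-- The free presentation construction: if the epicenter is trivial, `G` is capable. -/
lemma isCapable_of_epicenter_eq_bot {G : Type} [Group G] (h : epicenter G = ⊥) :
    IsCapable G := by
  classical
  set F := FreeGroup G
  set π : F →* G := FreeGroup.lift id with hπ
  have hπs : Function.Surjective π := fun g => ⟨FreeGroup.of g, by rw [hπ]; exact FreeGroup.lift_apply_of⟩
  set R : Subgroup F := π.ker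
  set N : Subgroup F := ⁅R, (⊤ : Subgroup F)⁆ with hN
  have hNR : N ≤ R := Subgroup.commutator_le_left R ⊤
  have hNle : N ≤ π.ker := hNR
  set E₀ := F ⧸ N
  set πb : E₀ →* G := QuotientGroup.lift N π hNle with hπb
  have hπbs : Function.Surjective πb := by
    intro g; obtain ⟨f, rfl⟩ := hπs g; exact ⟨QuotientGroup.mk f, rfl⟩
  have hker : πb.ker ≤ Subgroup.center E₀ := by
    intro x hx
    induction x using QuotientGroup.induction_on with
    | _ f =>
      have hf : f ∈ R := hx
      rw [Subgroup.mem_center_iff]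
      intro y
      induction y using QuotientGroup.induction_on with
      | _ g =>
        have : ⁅f, g⁆ ∈ N := Subgroup.commutator_mem_commutator hf (Subgroup.mem_top g)
        have h1 : (QuotientGroup.mk ⁅f, g⁆ : E₀) = 1 := (QuotientGroup.eq_one_iff _).mpr this
        have h2 : ⁅(QuotientGroup.mk f : E₀), (QuotientGroup.mk g : E₀)⁆ = 1 := by
          exact (map_commutatorElement (QuotientGroup.mk' N) f g).symm.trans h1
        exact (commutatorElement_eq_one_iff_mul_comm.mp h2).symm
  -- the image of the center of E₀ is contained in the epicenter, hence trivial
  have hZle : Subgroup.map πb (Subgroup.center E₀) ≤ epicenter G := by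
    intro z hz
    rw [mem_epicenter]
    intro E _ ψ hψs hψc
    -- lift
    set φ : F →* E := FreeGroup.lift (fun g => Function.surjInv hψs g) with hφ
    have hcomm : ∀ f : F, ψ (φ f) = π f := by
      intro f
      have : ψ.comp φ = π := by
        apply FreeGroup.ext_hom
        intro g
        simp [hφ, hπ, Function.surjInv_eq hψs]
      rw [← this]; rfl
    have hNker : N ≤ φ.ker := by
      rw [hN, Subgroup.commutator_le]
      intro r hr f _
      have hrk : φ r ∈ ψ.ker := by
        rw [MonoidHom.mem_ker, hcomm]; exact hr
      have : φ r ∈ Subgroup.center E := hψc hrk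
      rw [MonoidHom.mem_ker, map_commutatorElement]
      exact commutatorElement_eq_one_iff_mul_comm.mpr ((Subgroup.mem_center_iff.mp this _).symm)
    set φb : E₀ →* E := QuotientGroup.lift N φ hNker with hφb
    have hcomm2 : ∀ x : E₀, ψ (φb x) = πb x := by
      intro x
      induction x using QuotientGroup.induction_on with
      | _ f => exact hcomm f
    obtain ⟨w, hw, rfl⟩ := hz
    refine ⟨φb w, ?_, hcomm2 w⟩
    show φb w ∈ Subgroup.center E
    have hw : w ∈ Subgroup.center E₀ := hw
    rw [Subgroup.mem_center_iff]
    intro e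
    obtain ⟨x, hx⟩ := hπbs (ψ e)
    rw [← hcomm2 x] at hx
    have hk : (φb x)⁻¹ * e ∈ ψ.ker := by
      rw [MonoidHom.mem_ker, map_mul, map_inv, hx, inv_mul_cancel]
    have hkc : ∀ y : E, y * ((φb x)⁻¹ * e) = ((φb x)⁻¹ * e) * y :=
      fun y => Subgroup.mem_center_iff.mp (hψc hk) y
    have hwx : x * w = w * x := Subgroup.mem_center_iff.mp hw x
    calc e * φb w = φb x * (((φb x)⁻¹ * e) * φb w) := by group
      _ = φb x * (φb w * ((φb x)⁻¹ * e)) := by rw [← hkc (φb w)]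
      _ = φb (x * w) * ((φb x)⁻¹ * e) := by rw [map_mul]; group
      _ = φb (w * x) * ((φb x)⁻¹ * e) := by rw [hwx]
      _ = φb w * e := by rw [map_mul]; group
  rw [h, le_bot_iff] at hZle
  -- hence center E₀ = ker πb
  have hcenter : Subgroup.center E₀ = πb.ker := by
    apply le_antisymm
    · intro x hx
      have : πb x ∈ (⊥ : Subgroup G) := hZle ▸ Subgroup.mem_map_of_mem πb hx
      simpa [MonoidHom.mem_ker] using this
    · exact hker
  refine ⟨E₀, inferInstance, ⟨?_⟩⟩
  exact (QuotientGroup.quotientMulEquivOfEq hcenter).trans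
    (QuotientGroup.quotientKerEquivOfSurjective πb hπbs)

/-- Twisted product used to build bilinear-cocycle central extensions. -/
structure Tw (G : Type) (p : ℕ) where
  fst : G
  snd : ZMod p

def twGroup {G : Type} [Group G] {p : ℕ} (f g : G → ZMod p)
    (hf : ∀ x y, f (x * y) = f x + f y) (hg : ∀ x y, g (x * y) = g x + g y) :
    Group (Tw G p) where
  mul a b := ⟨a.fst * b.fst, a.snd + b.snd + f a.fst * g b.fst⟩
  one := ⟨1, 0⟩
  inv a := ⟨a.fst⁻¹, -a.snd + f a.fst * g a.fst⟩
  mul_assoc a b c := by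
    show (⟨a.fst * b.fst * c.fst,
        (a.snd + b.snd + f a.fst * g b.fst) + c.snd + f (a.fst * b.fst) * g c.fst⟩ : Tw G p) =
      ⟨a.fst * (b.fst * c.fst),
        a.snd + (b.snd + c.snd + f b.fst * g c.fst) + f a.fst * g (b.fst * c.fst)⟩
    simp only [Tw.mk.injEq, hf, hg]
    exact ⟨mul_assoc _ _ _, by ring⟩
  one_mul a := by
    have h1 : f 1 = 0 := by have := hf 1 1; simpa using this
    obtain ⟨a1, a2⟩ := a
    show (⟨1 * a1, 0 + a2 + f 1 * g a1⟩ : Tw G p) = ⟨a1, a2⟩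
    simp [h1]
  mul_one a := by
    have h1 : g 1 = 0 := by have := hg 1 1; simpa using this
    obtain ⟨a1, a2⟩ := a
    show (⟨a1 * 1, a2 + 0 + f a1 * g 1⟩ : Tw G p) = ⟨a1, a2⟩
    simp [h1]
  inv_mul_cancel a := by
    have h1 : f 1 = 0 := by have := hf 1 1; simpa using this
    have h2 : f a.fst⁻¹ = -f a.fst := by
      have := hf a.fst⁻¹ a.fst; rw [inv_mul_cancel, h1] at this; linear_combination -this
    show (⟨a.fst⁻¹ * a.fst, (-a.snd + f a.fst * g a.fst) + a.snd + f a.fst⁻¹ * g a.fst⟩ : Tw G p)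
      = ⟨1, 0⟩
    simp only [Tw.mk.injEq, h2]
    exact ⟨inv_mul_cancel _, by ring⟩

/-- Core lemma: elements of the epicenter cannot be separated by a
bilinear cocycle. -/
lemma epicenter_cocycle {G : Type} [Group G] {p : ℕ} (f g : G → ZMod p)
    (hf : ∀ x y, f (x * y) = f x + f y) (hg : ∀ x y, g (x * y) = g x + g y)
    {z : G} (hz : z ∈ epicenter G) (w : G) : f z * g w = f w * g z := by
  have h1 : f 1 = 0 := by have := hf 1 1; simpa using this
  have h2 : g 1 = 0 := by have := hg 1 1; simpa using this
  letI : Group (Tw G p) := twGroup f g hf hg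
  have hmul : ∀ a b : Tw G p,
      a * b = ⟨a.fst * b.fst, a.snd + b.snd + f a.fst * g b.fst⟩ := fun _ _ => rfl
  have hone : (1 : Tw G p) = ⟨1, 0⟩ := rfl
  set ψ : Tw G p →* G := MonoidHom.mk' (fun a => a.fst) (fun a b => rfl) with hψ
  have hs : Function.Surjective ψ := fun x => ⟨⟨x, 0⟩, rfl⟩
  have hc : ψ.ker ≤ Subgroup.center (Tw G p) := by
    intro x hx
    have hx1 : x.fst = 1 := hx
    rw [Subgroup.mem_center_iff]
    intro y
    rw [hmul, hmul, hx1]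
    simp [h1, h2, add_comm]
  obtain ⟨e, he, hez⟩ := mem_epicenter.mp hz (Tw G p) _ ψ hs hc
  have he : e ∈ Subgroup.center (Tw G p) := he
  have hez : e.fst = z := hez
  have := Subgroup.mem_center_iff.mp he ⟨w, 0⟩
  rw [hmul, hmul, hez] at this
  have hsnd := congrArg Tw.snd this
  simp only at hsnd
  linear_combination -hsnd

/-- A group whose abelianization is cyclic, and whose commutator subgroup is
central, is cyclic. -/
lemma isCyclic_of_abelianization_cyclic {G : Type} [Group G]
    (hcomm : ∀ c ∈ commutator G, ∀ g : G, c * g = g * c)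
    (x : G) (hx : ∀ y : Abelianization G, y ∈ Subgroup.zpowers (Abelianization.of x)) :
    IsCyclic G := by
  have hrep : ∀ y : G, ∃ m : ℤ, ∃ c ∈ commutator G, y = x ^ m * c := by
    intro y
    obtain ⟨m, hm⟩ := hx (Abelianization.of y)
    have hm' : Abelianization.of (x ^ m) = Abelianization.of y := by
      rw [map_zpow]; exact hm
    have hc : (x ^ m)⁻¹ * y ∈ commutator G := QuotientGroup.eq.mp hm'
    exact ⟨m, (x ^ m)⁻¹ * y, hc, by group⟩
  have hbot : commutator G = ⊥ := by
    rw [commutator_def, eq_bot_iff, Subgroup.commutator_le]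
    intro g _ h _
    rw [Subgroup.mem_bot, commutatorElement_eq_one_iff_mul_comm]
    obtain ⟨m, c, hc, rfl⟩ := hrep g
    obtain ⟨n, d, hd, rfl⟩ := hrep h
    have h1 : c * (x ^ n * d) = x ^ n * d * c := hcomm c hc _
    have h2 : d * (x ^ m * c) = x ^ m * c * d := hcomm d hd _
    have h3 : d * c = c * d := (hcomm c hc d).symm
    have key : x ^ m * (x ^ n) = x ^ n * (x ^ m) := by
      rw [← zpow_add, ← zpow_add, add_comm]
    calc x ^ m * c * (x ^ n * d) = x ^ m * (c * (x ^ n * d)) := by group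
      _ = x ^ m * (x ^ n * d * c) := by rw [h1]
      _ = x ^ m * x ^ n * (d * c) := by group
      _ = x ^ n * x ^ m * (d * c) := by rw [key]
      _ = x ^ n * x ^ m * (c * d) := by rw [h3]
      _ = x ^ n * (x ^ m * c * d) := by group
      _ = x ^ n * (d * (x ^ m * c)) := by rw [h2]
      _ = x ^ n * d * (x ^ m * c) := by group
  refine ⟨⟨x, fun y => ?_⟩⟩
  obtain ⟨m, c, hc, rfl⟩ := hrep y
  rw [hbot, Subgroup.mem_bot] at hc
  exact ⟨m, by rw [hc, mul_one]⟩

/-- Separating additive functional for a single element outside the commutator. -/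
lemma exists_sep1 {G : Type} [Group G] {p : ℕ} (hp : p.Prime) (hexp : ∀ x : G, x ^ p = 1) {z : G} (hz : z ∉ commutator G) :
    ∃ f : G → ZMod p, (∀ x y, f (x * y) = f x + f y) ∧ f z = 1 := by
  haveI : Fact p.Prime := ⟨hp⟩
  haveI : NeZero p := ⟨hp.pos.ne'⟩
  haveI : Module (ZMod p) (Additive (Abelianization G)) := AddCommGroup.zmodModule (by
    intro v
    obtain ⟨y, hy⟩ : ∃ y : G, Abelianization.of y = Additive.toMul v :=
      Quotient.inductionOn' (Additive.toMul v) (fun y => ⟨y, rfl⟩)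
    have h1 : (Abelianization.of y) ^ p = 1 := by rw [← map_pow, hexp, map_one]
    have h2 : v = Additive.ofMul (Abelianization.of y) := by rw [hy]; simp
    show p • v = 0
    rw [h2, ← ofMul_pow, h1]
    rfl)
  haveI : NoZeroSMulDivisors (ZMod p) (Additive (Abelianization G)) := ⟨by
    intro a v h
    by_cases ha : a = 0
    · exact Or.inl ha
    · refine Or.inr ?_
      have := congrArg (fun w => a⁻¹ • w) h
      simpa [smul_smul, inv_mul_cancel₀ ha] using this⟩
  have hzb0 : Additive.ofMul (Abelianization.of z) ≠ (0 : Additive (Abelianization G)) := by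
    intro h
    apply hz
    have : Abelianization.of z = 1 := h
    exact (QuotientGroup.eq_one_iff z).mp this
  have li := (linearIndepOn_singleton_iff (R := ZMod p) (v := id)).mpr hzb0
  have hmem : Additive.ofMul (Abelianization.of z) ∈ li.extend (Set.subset_univ _) :=
    li.subset_extend _ (Set.mem_singleton _)
  refine ⟨fun y => (Module.Basis.extend li).coord ⟨_, hmem⟩ (Additive.ofMul (Abelianization.of y)),
    ?_, ?_⟩
  · intro a c
    have h3 : Additive.ofMul (Abelianization.of (a * c))
        = Additive.ofMul (Abelianization.of a) + Additive.ofMul (Abelianization.of c) := by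
      rw [map_mul]; rfl
    beta_reduce
    rw [h3, map_add]
  · beta_reduce
    rw [Module.Basis.coord_apply]
    have h4 : ((Module.Basis.extend li).repr (Module.Basis.extend li ⟨_, hmem⟩)) ⟨_, hmem⟩ = 1 := by
      rw [Module.Basis.repr_self]; simp
    rw [Module.Basis.extend_apply_self] at h4
    exact h4




/-- Separating pair of additive functionals. -/
lemma exists_sep2 {G : Type} [Group G] {p : ℕ} (hp : p.Prime) (hexp : ∀ x : G, x ^ p = 1)
    (hcomm : ∀ c ∈ commutator G, ∀ g : G, c * g = g * c) (hnc : ¬IsCyclic G)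
    {z : G} (hz : z ∉ commutator G) :
    ∃ f g : G → ZMod p, (∀ x y, f (x * y) = f x + f y) ∧ (∀ x y, g (x * y) = g x + g y) ∧
      ∃ w : G, f z * g w ≠ f w * g z := by
  haveI : Fact p.Prime := ⟨hp⟩
  haveI : NeZero p := ⟨hp.pos.ne'⟩
  haveI : Module (ZMod p) (Additive (Abelianization G)) := AddCommGroup.zmodModule (by
    intro v
    obtain ⟨y, hy⟩ : ∃ y : G, Abelianization.of y = Additive.toMul v :=
      Quotient.inductionOn' (Additive.toMul v) (fun y => ⟨y, rfl⟩)
    have h1 : (Abelianization.of y) ^ p = 1 := by rw [← map_pow, hexp, map_one]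
    have h2 : v = Additive.ofMul (Abelianization.of y) := by rw [hy]; simp
    show p • v = 0
    rw [h2, ← ofMul_pow, h1]
    rfl)
  haveI : NoZeroSMulDivisors (ZMod p) (Additive (Abelianization G)) := ⟨by
    intro a v h
    by_cases ha : a = 0
    · exact Or.inl ha
    · refine Or.inr ?_
      have := congrArg (fun w => a⁻¹ • w) h
      simpa [smul_smul, inv_mul_cancel₀ ha] using this⟩
  have hzb0 : Additive.ofMul (Abelianization.of z) ≠ (0 : Additive (Abelianization G)) := by
    intro h
    apply hz
    have : Abelianization.of z = 1 := h
    exact (QuotientGroup.eq_one_iff z).mp this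
  set zb : Additive (Abelianization G) := Additive.ofMul (Abelianization.of z) with hzbd
  -- find an element outside the span of `zb`
  have hw : ∃ w : G, Additive.ofMul (Abelianization.of w) ∉
      Submodule.span (ZMod p) ({zb} : Set (Additive (Abelianization G))) := by
    by_contra hcon
    push_neg at hcon
    apply hnc
    apply isCyclic_of_abelianization_cyclic hcomm z
    intro yq
    obtain ⟨y, rfl⟩ : ∃ y : G, Abelianization.of y = yq :=
      Quotient.inductionOn' yq (fun y => ⟨y, rfl⟩)
    obtain ⟨a, ha⟩ := Submodule.mem_span_singleton.mp (hcon y)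
    have h5 : ((a.val : ℕ) : ZMod p) = a := by rw [ZMod.natCast_val, ZMod.cast_id]
    have h6 : (a.val : ℕ) • zb = Additive.ofMul (Abelianization.of y) := by
      rw [← Nat.cast_smul_eq_nsmul (ZMod p), h5]; exact ha
    rw [hzbd, ← ofMul_pow] at h6
    have h7 : (Abelianization.of z) ^ (a.val) = Abelianization.of y :=
      congrArg Additive.toMul h6
    rw [Subgroup.mem_zpowers_iff]
    refine ⟨((a.val : ℕ) : ℤ), ?_⟩
    rw [zpow_natCast]
    exact h7
  obtain ⟨w, hw⟩ := hw
  set wb : Additive (Abelianization G) := Additive.ofMul (Abelianization.of w) with hwbd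
  have hzw : zb ≠ wb := by
    intro h
    exact hw (h ▸ Submodule.mem_span_singleton_self zb)
  have li1 := (linearIndepOn_singleton_iff (R := ZMod p) (v := id)).mpr hzb0
  have li2 := li1.id_insert hw
  have hmemz : zb ∈ li2.extend (Set.subset_univ _) :=
    li2.subset_extend _ (Set.mem_insert_of_mem _ (Set.mem_singleton _))
  have hmemw : wb ∈ li2.extend (Set.subset_univ _) :=
    li2.subset_extend _ (Set.mem_insert _ _)
  set b := Module.Basis.extend li2 with hbd
  have hne : (⟨zb, hmemz⟩ : li2.extend (Set.subset_univ _)) ≠ ⟨wb, hmemw⟩ := by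
    intro h; exact hzw (congrArg Subtype.val h)
  classical
  have evf : ∀ (i j : li2.extend (Set.subset_univ _)), (b.coord i) (j : Additive (Abelianization G))
      = if j = i then 1 else 0 := by
    intro i j
    rw [Module.Basis.coord_apply, ← Module.Basis.extend_apply_self li2 j, Module.Basis.repr_self,
      Finsupp.single_apply]
  refine ⟨fun y => b.coord ⟨zb, hmemz⟩ (Additive.ofMul (Abelianization.of y)),
    fun y => b.coord ⟨wb, hmemw⟩ (Additive.ofMul (Abelianization.of y)), ?_, ?_, ?_⟩
  · intro x y
    beta_reduce
    have h3 : Additive.ofMul (Abelianization.of (x * y))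
        = Additive.ofMul (Abelianization.of x) + Additive.ofMul (Abelianization.of y) := by
      rw [map_mul]; rfl
    rw [h3, map_add]
  · intro x y
    beta_reduce
    have h3 : Additive.ofMul (Abelianization.of (x * y))
        = Additive.ofMul (Abelianization.of x) + Additive.ofMul (Abelianization.of y) := by
      rw [map_mul]; rfl
    rw [h3, map_add]
  · refine ⟨w, ?_⟩
    beta_reduce
    have e1 : (b.coord ⟨zb, hmemz⟩) zb = 1 := by rw [evf ⟨zb, hmemz⟩ ⟨zb, hmemz⟩]; simp
    have e2 : (b.coord ⟨wb, hmemw⟩) zb = 0 := by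
      rw [evf ⟨wb, hmemw⟩ ⟨zb, hmemz⟩, if_neg hne]
    have e3 : (b.coord ⟨zb, hmemz⟩) wb = 0 := by
      rw [evf ⟨zb, hmemz⟩ ⟨wb, hmemw⟩, if_neg (Ne.symm hne)]
    have e4 : (b.coord ⟨wb, hmemw⟩) wb = 1 := by rw [evf ⟨wb, hmemw⟩ ⟨wb, hmemw⟩]; simp
    show b.coord ⟨zb, hmemz⟩ zb * b.coord ⟨wb, hmemw⟩ wb
      ≠ b.coord ⟨zb, hmemz⟩ wb * b.coord ⟨wb, hmemw⟩ zb
    rw [e1, e2, e3, e4]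
    intro hcon
    rw [one_mul, zero_mul] at hcon
    exact one_ne_zero hcon

lemma comm_central_of_lcs {G : Type} [Group G] (h2 : (⊤ : Subgroup G).lowerCentralSeries 2 = ⊥) :
    ∀ c ∈ commutator G, ∀ g : G, c * g = g * c := by
  intro c hc g
  have h1 : ⁅c, g⁆ ∈ (⊤ : Subgroup G).lowerCentralSeries 2 := by
    rw [Subgroup.lowerCentralSeries_succ]
    exact Subgroup.commutator_mem_commutator
      (by rw [Subgroup.top_lowerCentralSeries_one]; exact hc) (Subgroup.mem_top g)
  rw [h2, Subgroup.mem_bot] at h1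
  exact commutatorElement_eq_one_iff_mul_comm.mp h1

lemma exists_not_mem_commutator {G : Type} [Group G] [Nontrivial G]
    (hcomm : ∀ c ∈ commutator G, ∀ g : G, c * g = g * c) :
    ∃ b : G, b ∉ commutator G := by
  by_contra hcon
  push_neg at hcon
  have hbot : commutator G = ⊥ := by
    rw [commutator_def, eq_bot_iff, Subgroup.commutator_le]
    intro g _ h _
    rw [Subgroup.mem_bot, commutatorElement_eq_one_iff_mul_comm]
    exact hcomm g (hcon g) h
  obtain ⟨x, hx⟩ := exists_ne (1 : G)
  exact hx (Subgroup.mem_bot.mp (hbot ▸ hcon x))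

lemma mem_commutator_fst {A B : Type} [Group A] [Group B] {c : A}
    (hc : c ∈ commutator A) : ((c, 1) : A × B) ∈ commutator (A × B) := by
  have h1 : ((c, 1) : A × B) ∈ Subgroup.map (MonoidHom.inl A B) (commutator A) :=
    ⟨c, hc, rfl⟩
  have h2 : Subgroup.map (MonoidHom.inl A B) (commutator A) ≤ commutator (A × B) := by
    rw [commutator_def, commutator_def, Subgroup.map_commutator]
    exact Subgroup.commutator_mono le_top le_top
  exact h2 h1

lemma epicenter_map_le {G H : Type} [Group G] [Group H] (e : G ≃* H) {z : G}
    (hz : z ∈ epicenter G) : e z ∈ epicenter H := by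
  rw [mem_epicenter] at *
  intro E _ ψ hs hc
  obtain ⟨w, hw, hwz⟩ := hz E _ (e.symm.toMonoidHom.comp ψ)
    (fun g => by
      obtain ⟨x, hx⟩ := hs (e g)
      exact ⟨x, by simp [hx]⟩)
    (by
      intro x hx
      apply hc
      have h3 : e.symm (ψ x) = 1 := hx
      have h4 := congrArg e h3
      simpa using h4)
  exact ⟨w, hw, by have := congrArg e hwz; simpa using this⟩

lemma epicenter_prod_fst {A B : Type} [Group A] [Group B] {a : A} {b : B}
    (h : (a, b) ∈ epicenter (A × B)) : a ∈ epicenter A := by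
  rw [mem_epicenter] at *
  intro E _ ψ hs hc
  obtain ⟨w, hw, hwz⟩ := h (E × B) _ (ψ.prodMap (MonoidHom.id B))
    (hs.prodMap Function.surjective_id)
    (by
      intro x hx
      have hx1 : ψ x.1 = 1 ∧ x.2 = 1 := by
        rw [MonoidHom.mem_ker, Prod.ext_iff] at hx
        exact hx
      rw [Subgroup.mem_center_iff]
      intro y
      have h5 : y.1 * x.1 = x.1 * y.1 := Subgroup.mem_center_iff.mp (hc hx1.1) y.1
      rw [Prod.ext_iff]
      refine ⟨h5, ?_⟩
      show y.2 * x.2 = x.2 * y.2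
      rw [hx1.2, mul_one, one_mul])
  have hw : w ∈ Subgroup.center (E × B) := hw
  refine ⟨w.1, ?_, ?_⟩
  · show w.1 ∈ Subgroup.center E
    rw [Subgroup.mem_center_iff]
    intro y
    have := Subgroup.mem_center_iff.mp hw (y, 1)
    rw [Prod.ext_iff] at this
    exact this.1
  · have := congrArg Prod.fst hwz
    exact this

lemma epicenter_prod_fst_mem_commutator {A B : Type} [Group A] [Group B] {p : ℕ}
    (hp : p.Prime) (hexpA : ∀ x : A, x ^ p = 1) (hexpB : ∀ x : B, x ^ p = 1)
    {b₀ : B} (hb₀ : b₀ ∉ commutator B) {a : A} {b : B}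
    (h : (a, b) ∈ epicenter (A × B)) : a ∈ commutator A := by
  haveI : Fact p.Prime := ⟨hp⟩
  by_contra hac
  obtain ⟨f₀, hf₀, hf₀z⟩ := exists_sep1 hp hexpA hac
  obtain ⟨g₀, hg₀, hg₀z⟩ := exists_sep1 hp hexpB hb₀
  have key := epicenter_cocycle (G := A × B) (fun x => f₀ x.1) (fun x => g₀ x.2)
    (fun x y => hf₀ x.1 y.1) (fun x y => hg₀ x.2 y.2) h ((1 : A), b₀)
  have hf1 : f₀ (1 : A) = 0 := by have := hf₀ 1 1; simpa using this
  simp only [hf₀z, hg₀z, hf1, zero_mul, one_mul] at key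
  exact one_ne_zero key

lemma commutatorElement_mul_left_central {E : Type} [Group E] (x y v : E)
    (hy : ⁅y, v⁆ ∈ Subgroup.center E) : ⁅x * y, v⁆ = ⁅x, v⁆ * ⁅y, v⁆ := by
  have hyv : ∀ g : E, g * ⁅y, v⁆ = ⁅y, v⁆ * g := Subgroup.mem_center_iff.mp hy
  have e1 : y * v = ⁅y, v⁆ * v * y := by rw [commutatorElement_def]; group
  calc ⁅x * y, v⁆ = x * (y * v) * y⁻¹ * x⁻¹ * v⁻¹ := by rw [commutatorElement_def]; group
    _ = x * (⁅y, v⁆ * v * y) * y⁻¹ * x⁻¹ * v⁻¹ := by rw [e1]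
    _ = x * ⁅y, v⁆ * (v * x⁻¹ * v⁻¹) := by group
    _ = ⁅y, v⁆ * x * (v * x⁻¹ * v⁻¹) := by rw [hyv x]
    _ = ⁅y, v⁆ * ⁅x, v⁆ := by rw [commutatorElement_def]; group
    _ = ⁅x, v⁆ * ⁅y, v⁆ := (hyv _).symm

/-- Key structural lemma: if `a` lies in the epicenter of `A` and in the
commutator subgroup of `A`, then `(a,1)` lies in the epicenter of `A × B`. -/
lemma epicenter_prod_of_left {A B : Type} [Group A] [Group B] {a : A}
    (ha : a ∈ epicenter A) (hac : a ∈ commutator A) :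
    ((a, 1) : A × B) ∈ epicenter (A × B) := by
  rw [mem_epicenter]
  intro E _ ψ hs hc
  set P : Subgroup (A × B) := (⊤ : Subgroup A).prod ⊥ with hP
  set Q : Subgroup (A × B) := (⊥ : Subgroup A).prod ⊤ with hQ
  set EA : Subgroup E := P.comap ψ with hEA
  set EB : Subgroup E := Q.comap ψ with hEB
  have hPA : ∀ x : E, x ∈ EA → (ψ x).2 = 1 := by
    intro x hx
    have : ψ x ∈ P := hx
    exact Subgroup.mem_bot.mp (Subgroup.mem_prod.mp this).2
  have hQB : ∀ x : E, x ∈ EB → (ψ x).1 = 1 := by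
    intro x hx
    have : ψ x ∈ Q := hx
    exact Subgroup.mem_bot.mp (Subgroup.mem_prod.mp this).1
  set ψA : EA →* A := (MonoidHom.fst A B).comp (ψ.comp EA.subtype) with hψA
  have hsA : Function.Surjective ψA := by
    intro x
    obtain ⟨e, he⟩ := hs (x, 1)
    have heEA : e ∈ EA := by
      show ψ e ∈ P
      rw [he]
      exact Subgroup.mem_prod.mpr ⟨Subgroup.mem_top _, Subgroup.mem_bot.mpr rfl⟩
    exact ⟨⟨e, heEA⟩, by simp [hψA, he]⟩
  have hcA : ψA.ker ≤ Subgroup.center EA := by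
    intro x hx
    have h1 : (ψ (x : E)).1 = 1 := hx
    have h2 : (ψ (x : E)).2 = 1 := hPA _ x.2
    have hxk : (x : E) ∈ ψ.ker := by
      rw [MonoidHom.mem_ker, Prod.ext_iff]
      exact ⟨h1, h2⟩
    have hxc := hc hxk
    rw [Subgroup.mem_center_iff]
    intro y
    apply Subtype.ext
    show (y : E) * x = (x : E) * y
    exact Subgroup.mem_center_iff.mp hxc y
  obtain ⟨et, het, heta⟩ := mem_epicenter.mp ha EA _ ψA hsA hcA
  have het : et ∈ Subgroup.center EA := het
  have hψet : ψ (et : E) = (a, 1) := Prod.ext heta (hPA _ et.2)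
  -- find a commutator-subgroup preimage of (a,1)
  have hinl : Subgroup.map (MonoidHom.inl A B) ⊤ = P := by
    ext ⟨x, y⟩
    constructor
    · rintro ⟨u, -, hu⟩
      rw [← hu]
      exact Subgroup.mem_prod.mpr ⟨Subgroup.mem_top _, Subgroup.mem_bot.mpr rfl⟩
    · intro hxy
      have h2 : y = 1 := Subgroup.mem_bot.mp (Subgroup.mem_prod.mp hxy).2
      exact ⟨x, Subgroup.mem_top _, by rw [h2]; rfl⟩
  have hmapEA : Subgroup.map ψ EA = P := Subgroup.map_comap_eq_self_of_surjective hs P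
  have haP : ((a, 1) : A × B) ∈ ⁅P, P⁆ := by
    rw [← hinl, ← Subgroup.map_commutator]
    exact ⟨a, hac, rfl⟩
  have haM : ((a, 1) : A × B) ∈ Subgroup.map ψ ⁅EA, EA⁆ := by
    rw [Subgroup.map_commutator, hmapEA]
    exact haP
  obtain ⟨cE, hcE, hcEψ⟩ := haM
  have hcE : cE ∈ ⁅EA, EA⁆ := hcE
  -- commutators with EB are central
  have hAB : ∀ x ∈ EA, ∀ v ∈ EB, ⁅x, v⁆ ∈ Subgroup.center E := by
    intro x hx v hv
    apply hc
    rw [MonoidHom.mem_ker, map_commutatorElement]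
    have h1 : (ψ x).2 = 1 := hPA _ hx
    have h2 : (ψ v).1 = 1 := hQB _ hv
    have hcompo : ⁅ψ x, ψ v⁆ = (⁅(ψ x).1, (ψ v).1⁆, ⁅(ψ x).2, (ψ v).2⁆) := rfl
    rw [hcompo, h1, h2]
    rw [Prod.ext_iff]
    constructor
    · show (ψ x).1 * 1 * (ψ x).1⁻¹ * 1⁻¹ = 1
      group
    · show 1 * (ψ v).2 * 1⁻¹ * (ψ v).2⁻¹ = 1
      group
  -- elements of ⁅EA, EA⁆ commute with EB
  have hcomm_cE : ∀ v ∈ EB, cE * v = v * cE := by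
    intro v hv
    have hcent : ⁅EA, EA⁆ ≤ Subgroup.centralizer {v} := by
      rw [Subgroup.commutator_le]
      intro g hg h hh
      set φ : EA →* Subgroup.center E :=
        { toFun := fun x => ⟨⁅(x : E), v⁆, hAB _ x.2 v hv⟩
          map_one' := by
            apply Subtype.ext
            show ⁅(1 : E), v⁆ = 1
            rw [commutatorElement_def]
            group
          map_mul' := by
            intro x y
            apply Subtype.ext
            show ⁅(x : E) * y, v⁆ = ⁅(x : E), v⁆ * ⁅(y : E), v⁆
            exact commutatorElement_mul_left_central _ _ _ (hAB _ y.2 v hv) } with hφ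
      have hφ1 : φ ⁅(⟨g, hg⟩ : EA), ⟨h, hh⟩⁆ = 1 := by
        rw [map_commutatorElement]
        exact commutatorElement_eq_one_iff_mul_comm.mpr
          (Subtype.ext (Subgroup.mem_center_iff.mp (φ ⟨h, hh⟩).2 _))
      have hφ2 : ⁅g, v⁆ = 1 ∨ True := Or.inr trivial
      have hval : ⁅⁅g, h⁆, v⁆ = 1 := congrArg Subtype.val hφ1
      rw [Subgroup.mem_centralizer_iff]
      intro u hu
      rw [Set.mem_singleton_iff] at hu
      subst hu
      exact (commutatorElement_eq_one_iff_mul_comm.mp hval).symm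
    have := Subgroup.mem_centralizer_iff.mp (hcent hcE) v (Set.mem_singleton _)
    exact this.symm
  -- now prove (et : E) is central in E
  have hket : cE⁻¹ * (et : E) ∈ ψ.ker := by
    rw [MonoidHom.mem_ker, map_mul, map_inv, hcEψ, hψet, inv_mul_cancel]
  have hkC : ∀ y : E, y * (cE⁻¹ * (et : E)) = (cE⁻¹ * (et : E)) * y :=
    Subgroup.mem_center_iff.mp (hc hket)
  refine ⟨(et : E), ?_, hψet⟩
  show (et : E) ∈ Subgroup.center E
  rw [Subgroup.mem_center_iff]
  intro x
  obtain ⟨u, hu⟩ := hs ((ψ x).1, 1)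
  have huEA : u ∈ EA := by
    show ψ u ∈ P
    rw [hu]
    exact Subgroup.mem_prod.mpr ⟨Subgroup.mem_top _, Subgroup.mem_bot.mpr rfl⟩
  have hvEB : u⁻¹ * x ∈ EB := by
    show ψ (u⁻¹ * x) ∈ Q
    rw [map_mul, map_inv, hu]
    refine Subgroup.mem_prod.mpr ⟨?_, Subgroup.mem_top _⟩
    show ((ψ x).1, (1 : B))⁻¹.1 * (ψ x).1 ∈ (⊥ : Subgroup A)
    rw [Subgroup.mem_bot]
    show (ψ x).1⁻¹ * (ψ x).1 = 1
    group
  have h6 : u * (et : E) = (et : E) * u :=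
    congrArg Subtype.val (Subgroup.mem_center_iff.mp het ⟨u, huEA⟩)
  have h7 : cE * (u⁻¹ * x) = (u⁻¹ * x) * cE := hcomm_cE _ hvEB
  have h8 : (et : E) * (u⁻¹ * x) = (u⁻¹ * x) * (et : E) := by
    have hdecomp : (et : E) = cE * (cE⁻¹ * (et : E)) := by group
    calc (et : E) * (u⁻¹ * x) = cE * ((cE⁻¹ * (et : E)) * (u⁻¹ * x)) := by group
      _ = cE * ((u⁻¹ * x) * (cE⁻¹ * (et : E))) := by rw [← hkC (u⁻¹ * x)]
      _ = (cE * (u⁻¹ * x)) * (cE⁻¹ * (et : E)) := by group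
      _ = ((u⁻¹ * x) * cE) * (cE⁻¹ * (et : E)) := by rw [h7]
      _ = (u⁻¹ * x) * (et : E) := by group
  calc x * (et : E) = u * ((u⁻¹ * x) * (et : E)) := by group
    _ = u * ((et : E) * (u⁻¹ * x)) := by rw [← h8]
    _ = (u * (et : E)) * (u⁻¹ * x) := by group
    _ = ((et : E) * u) * (u⁻¹ * x) := by rw [h6]
    _ = (et : E) * x := by group


lemma epicenter_le_commutator {G : Type} [Group G] {p : ℕ} (hp : p.Prime)
    (hexp : ∀ x : G, x ^ p = 1) (hcomm : ∀ c ∈ commutator G, ∀ g : G, c * g = g * c)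
    (hnc : ¬IsCyclic G) : epicenter G ≤ commutator G := by
  intro z hz
  by_contra hzc
  obtain ⟨f, g, hf, hg, w, hne⟩ := exists_sep2 hp hexp hcomm hnc hzc
  exact hne (epicenter_cocycle f g hf hg hz w)

lemma mem_commutator_snd {A B : Type} [Group A] [Group B] {c : B}
    (hc : c ∈ commutator B) : ((1, c) : A × B) ∈ commutator (A × B) := by
  have h1 : ((1, c) : A × B) ∈ Subgroup.map (MonoidHom.inr A B) (commutator B) :=
    ⟨c, hc, rfl⟩
  have h2 : Subgroup.map (MonoidHom.inr A B) (commutator B) ≤ commutator (A × B) := by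
    rw [commutator_def, commutator_def, Subgroup.map_commutator]
    exact Subgroup.commutator_mono le_top le_top
  exact h2 h1

lemma commutator_eq_bot_of_isCyclic {G : Type} [Group G] (h : IsCyclic G) :
    commutator G = ⊥ := by
  obtain ⟨x, hx⟩ := h.exists_generator
  rw [commutator_def, eq_bot_iff, Subgroup.commutator_le]
  intro g _ h' _
  rw [Subgroup.mem_bot, commutatorElement_eq_one_iff_mul_comm]
  obtain ⟨m, hm⟩ := hx g
  obtain ⟨n, hn⟩ := hx h'
  rw [← hm, ← hn, ← zpow_add, ← zpow_add, add_comm]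

/-- a nontrivial direct product of class at most 2 and odd prime
exponent `p` is capable iff each factor is capable or nontrivial cyclic. -/
theorem stmt_13 (p : ℕ) (hp : p.Prime) (hodd : Odd p)
    (A B : Type) [Group A] [Group B] [Nontrivial A] [Nontrivial B]
    (h2 : (⊤ : Subgroup (A × B)).lowerCentralSeries 2 = ⊥) (hexp : ∀ g : A × B, g ^ p = 1) :
    IsCapable (A × B) ↔
      (IsCapable A ∨ (IsCyclic A ∧ Nontrivial A)) ∧
      (IsCapable B ∨ (IsCyclic B ∧ Nontrivial B)) := by
  have hcommAB := comm_central_of_lcs h2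
  have hexpA : ∀ x : A, x ^ p = 1 := fun x => by
    simpa using congrArg Prod.fst (hexp (x, 1))
  have hexpB : ∀ x : B, x ^ p = 1 := fun x => by
    simpa using congrArg Prod.snd (hexp (1, x))
  have hcommA : ∀ c ∈ commutator A, ∀ g : A, c * g = g * c := by
    intro c hc g
    have h1 := hcommAB _ (mem_commutator_fst (B := B) hc) (g, 1)
    simpa using congrArg Prod.fst h1
  have hcommB : ∀ c ∈ commutator B, ∀ g : B, c * g = g * c := by
    intro c hc g
    have h1 := hcommAB _ (mem_commutator_snd (A := A) hc) (1, g)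
    simpa using congrArg Prod.snd h1
  constructor
  · intro hcap
    have hbot := epicenter_eq_bot_of_isCapable hcap
    constructor
    · by_cases hA : IsCyclic A
      · exact Or.inr ⟨hA, inferInstance⟩
      · left
        apply isCapable_of_epicenter_eq_bot
        rw [eq_bot_iff]
        intro z hz
        have hzc : z ∈ commutator A := epicenter_le_commutator hp hexpA hcommA hA hz
        have hmem := epicenter_prod_of_left (B := B) hz hzc
        rw [hbot, Subgroup.mem_bot, Prod.ext_iff] at hmem
        exact Subgroup.mem_bot.mpr hmem.1
    · by_cases hB : IsCyclic B
      · exact Or.inr ⟨hB, inferInstance⟩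
      · left
        apply isCapable_of_epicenter_eq_bot
        rw [eq_bot_iff]
        intro z hz
        have hzc : z ∈ commutator B := epicenter_le_commutator hp hexpB hcommB hB hz
        have hmem := epicenter_prod_of_left (B := A) hz hzc
        have hmem2 := epicenter_map_le (MulEquiv.prodComm : B × A ≃* A × B) hmem
        have heq : (MulEquiv.prodComm : B × A ≃* A × B) ((z, 1) : B × A) = ((1, z) : A × B) := rfl
        rw [heq, hbot, Subgroup.mem_bot, Prod.ext_iff] at hmem2
        exact Subgroup.mem_bot.mpr hmem2.2
  · rintro ⟨hA, hB⟩
    apply isCapable_of_epicenter_eq_bot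
    rw [eq_bot_iff]
    rintro ⟨z1, z2⟩ hz
    have hzswap : ((z2, z1) : B × A) ∈ epicenter (B × A) := by
      have := epicenter_map_le (MulEquiv.prodComm : A × B ≃* B × A) hz
      exact this
    have hz1e : z1 ∈ epicenter A := epicenter_prod_fst hz
    have hz2e : z2 ∈ epicenter B := epicenter_prod_fst hzswap
    obtain ⟨b₀, hb₀⟩ := exists_not_mem_commutator hcommB
    obtain ⟨a₀, ha₀⟩ := exists_not_mem_commutator hcommA
    have hz1c : z1 ∈ commutator A :=
      epicenter_prod_fst_mem_commutator hp hexpA hexpB hb₀ hz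
    have hz2c : z2 ∈ commutator B :=
      epicenter_prod_fst_mem_commutator hp hexpB hexpA ha₀ hzswap
    have hz1 : z1 = 1 := by
      rcases hA with hcapA | ⟨hcycA, _⟩
      · have hbA := epicenter_eq_bot_of_isCapable hcapA
        exact Subgroup.mem_bot.mp (hbA ▸ hz1e)
      · have hbA := commutator_eq_bot_of_isCyclic hcycA
        exact Subgroup.mem_bot.mp (hbA ▸ hz1c)
    have hz2 : z2 = 1 := by
      rcases hB with hcapB | ⟨hcycB, _⟩
      · have hbB := epicenter_eq_bot_of_isCapable hcapB
        exact Subgroup.mem_bot.mp (hbB ▸ hz2e)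
      · have hbB := commutator_eq_bot_of_isCyclic hcycB
        exact Subgroup.mem_bot.mp (hbB ▸ hz2c)
    rw [Subgroup.mem_bot, Prod.ext_iff]
    exact ⟨hz1, hz2⟩
end
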